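/- arXiv:2302.10814 — 2 statements merged into one kernel-verified Lean document; each statement's English description precedes it below -/
import Mathlib

section
/- For every noncrossing partition λ of size n, the excedance class C_λ is a Bruhat interval: C_λ = {w ∈ S_n : T_λ ≤ w ≤ Q_λ in the Bruhat order}, with Bruhat-minimum the 321-avoiding permutation T_λ and Bruhat-maximum Q_λ. -/
open scoped Classical

noncomputable section

/-- `IsNCP n A` : `A` is the arc set of a noncrossing partition of size `n`
(arcs `(i,j)` with `i < j`; no two distinct arcs `(i,k)`, `(j,l)` with `i ≤ j < k ≤ l`,
i.e. no crossings and no shared endpoints). -/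
def IsNCP (n : ℕ) (A : Finset (Fin n × Fin n)) : Prop :=
  (∀ p ∈ A, p.1 < p.2) ∧
    ∀ p ∈ A, ∀ q ∈ A, p ≠ q → ¬(p.1 ≤ q.1 ∧ q.1 < p.2 ∧ p.2 ≤ q.2)

/-- Noncrossing partitions of size `n` (labelled `1, …, n`, realized as `Fin n`). -/
def NCP (n : ℕ) : Type := {A : Finset (Fin n × Fin n) // IsNCP n A}

noncomputable instance (n : ℕ) : Fintype (NCP n) := by
  unfold NCP; infer_instance

namespace NCP

variable {n : ℕ}

/-- The set `λ⁺` of left endpoints of arcs. -/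
def lpos (lam : NCP n) : Finset (Fin n) := lam.1.image Prod.fst

/-- The set `λ⁻` of right endpoints of arcs. -/
def rpos (lam : NCP n) : Finset (Fin n) := lam.1.image Prod.snd

/-- `a` and `b` lie in the same connected component of `λ` viewed as a graph. -/
def Connected (lam : NCP n) (a b : Fin n) : Prop :=
  Relation.ReflTransGen (fun x y => (x, y) ∈ lam.1 ∨ (y, x) ∈ lam.1) a b

/-- The connected component of `j` in `λ`. -/
def component (lam : NCP n) (j : Fin n) : Finset (Fin n) :=
  Finset.univ.filter fun i => Connected lam j i

theorem mem_component_self (lam : NCP n) (j : Fin n) : j ∈ component lam j :=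
  Finset.mem_filter.mpr ⟨Finset.mem_univ j, Relation.ReflTransGen.refl⟩

/-- The largest element of the connected component of `j` in `λ`. -/
def compMax (lam : NCP n) (j : Fin n) : Fin n :=
  (component lam j).max' ⟨j, mem_component_self lam j⟩

/-- The function underlying the permutation `Q_λ` : `j ↦ i` if `(i,j)` is an arc of `λ`,
and `j ↦` the largest element of the connected component of `j` otherwise. -/
def Qfun (lam : NCP n) (j : Fin n) : Fin n :=
  if h : ∃ i, (i, j) ∈ lam.1 then h.choose else compMax lam j

/-- `Q` is the permutation `Q_λ`. -/
def IsQ (lam : NCP n) (Q : Equiv.Perm (Fin n)) : Prop :=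
  ∀ j, Q j = Qfun lam j

/-- `T` is the permutation `T_λ` : the bijection mapping `λ⁻` onto `λ⁺` in an
order-preserving way and the complement of `λ⁻` onto the complement of `λ⁺` in an
order-preserving way. -/
def IsT (lam : NCP n) (T : Equiv.Perm (Fin n)) : Prop :=
  (∀ j, j ∈ rpos lam ↔ T j ∈ lpos lam) ∧
  (∀ j j', j ∈ rpos lam → j' ∈ rpos lam → j < j' → T j < T j') ∧
  (∀ j j', j ∉ rpos lam → j' ∉ rpos lam → j < j' → T j < T j')

end NCP

/-- Weak excedance positions `E_pos(w) = {i : i ≤ w(i)}`. -/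
def ExcPos {n : ℕ} (w : Equiv.Perm (Fin n)) : Finset (Fin n) :=
  Finset.univ.filter fun i => i ≤ w i

/-- Weak excedance values `E_val(w) = {w(i) : i ≤ w(i)}`. -/
def ExcVal {n : ℕ} (w : Equiv.Perm (Fin n)) : Finset (Fin n) :=
  (ExcPos w).image w

/-- The excedance relation `∼`. -/
def ExcEq {n : ℕ} (v w : Equiv.Perm (Fin n)) : Prop :=
  ExcVal v = ExcVal w ∧ ExcPos v = ExcPos w

/-- The excedance relation as a setoid on `S_n`. -/
def excSetoid (n : ℕ) : Setoid (Equiv.Perm (Fin n)) where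
  r := ExcEq
  iseqv := ⟨fun _ => ⟨rfl, rfl⟩, fun h => ⟨h.1.symm, h.2.symm⟩,
    fun h h' => ⟨h.1.trans h'.1, h.2.trans h'.2⟩⟩

namespace NCP

/-- The excedance class `C_λ`. -/
def Cset {n : ℕ} (lam : NCP n) : Set (Equiv.Perm (Fin n)) :=
  {w | ExcVal w = Finset.univ \ lpos lam ∧ ExcPos w = Finset.univ \ rpos lam}

end NCP

/-- Number of inversions of a permutation. -/
def bruhatLen {n : ℕ} (w : Equiv.Perm (Fin n)) : ℕ :=
  (Finset.univ.filter fun p : Fin n × Fin n => p.1 < p.2 ∧ w p.2 < w p.1).card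

/-- The Bruhat order on `S_n` : generated by `v < w` whenever `w v⁻¹` is a
transposition and `ℓ(v) < ℓ(w)`. -/
def BruhatLE {n : ℕ} (v w : Equiv.Perm (Fin n)) : Prop :=
  Relation.ReflTransGen (fun a b => (b * a⁻¹).IsSwap ∧ bruhatLen a < bruhatLen b) v w

/-- Strict Bruhat order. -/
def BruhatLT {n : ℕ} (v w : Equiv.Perm (Fin n)) : Prop :=
  BruhatLE v w ∧ v ≠ w

/-- `λ` is covered by `μ` : `λ` is obtained from `μ` by removing an arc `(i, i+1)`,
or by replacing an arc `(i,k)` by two arcs `(i,j)`, `(j,k)` with `i < j < k`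
(validity of the result is enforced by `λ` being a noncrossing partition). -/
def NCPCovBy {n : ℕ} (lam mu : NCP n) : Prop :=
  (∃ i j : Fin n, (j : ℕ) = (i : ℕ) + 1 ∧ (i, j) ∈ mu.1 ∧ lam.1 = mu.1.erase (i, j)) ∨
  (∃ i j k : Fin n, i < j ∧ j < k ∧ (i, k) ∈ mu.1 ∧
      lam.1 = insert (i, j) (insert (j, k) (mu.1.erase (i, k))))

/-- The partial order `⪯` on noncrossing partitions generated by the covering relation. -/
def NCPle {n : ℕ} (lam mu : NCP n) : Prop :=
  Relation.ReflTransGen (fun a b => NCPCovBy a b) lam mu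

/-- The defining relations of the Temperley–Lieb algebra `TL_n(2)`. -/
inductive TLRel (n : ℕ) : FreeAlgebra ℂ (Fin (n - 1)) → FreeAlgebra ℂ (Fin (n - 1)) → Prop
  | sq (i : Fin (n - 1)) :
      TLRel n (FreeAlgebra.ι ℂ i * FreeAlgebra.ι ℂ i) (2 * FreeAlgebra.ι ℂ i)
  | far (i j : Fin (n - 1)) (h : (i : ℕ) + 1 < (j : ℕ) ∨ (j : ℕ) + 1 < (i : ℕ)) :
      TLRel n (FreeAlgebra.ι ℂ i * FreeAlgebra.ι ℂ j) (FreeAlgebra.ι ℂ j * FreeAlgebra.ι ℂ i)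
  | near (i j : Fin (n - 1)) (h : (i : ℕ) + 1 = (j : ℕ) ∨ (j : ℕ) + 1 = (i : ℕ)) :
      TLRel n (FreeAlgebra.ι ℂ i * FreeAlgebra.ι ℂ j * FreeAlgebra.ι ℂ i) (FreeAlgebra.ι ℂ i)

/-- The Temperley–Lieb algebra `TL_n(2)`. -/
abbrev TL (n : ℕ) := RingQuot (TLRel n)

/-- The generator `e_i` of `TL_n(2)`. -/
def TLgen (n : ℕ) (i : Fin (n - 1)) : TL n :=
  RingQuot.mkAlgHom ℂ (TLRel n) (FreeAlgebra.ι ℂ i)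

/-- The simple transposition `s_i = (i, i+1)` in `S_n`. -/
def simpleTransposition (n : ℕ) (i : Fin (n - 1)) : Equiv.Perm (Fin n) :=
  Equiv.swap ⟨i.val, lt_of_lt_of_le i.isLt (Nat.sub_le n 1)⟩
    ⟨i.val + 1, by have h := i.isLt; omega⟩

open MvPolynomial

/-- The monomial quasisymmetric polynomial `M_α` in `n` variables,
for a composition `α = (α 0, …, α (k-1))`. -/
noncomputable def Mpoly (n k : ℕ) (α : Fin k → ℕ) : MvPolynomial (Fin n) ℚ :=
  ∑ c ∈ Finset.univ.filter (fun c : Fin k → Fin n => StrictMono c),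
    ∏ s : Fin k, X (c s) ^ α s

/-- The vanishing polynomial `P_α`.  The sum over pairs (a coarsening `β ⪰ α` with
blocks witnessed by `1 = f_1 < ⋯ < f_{ℓ+1} = k+1`, and indices `i_1 < ⋯ < i_ℓ`)
is re-indexed by monotone maps `c : Fin k → Fin n`: the fibers of `c` are the blocks of
the coarsening, and `c` sends the `j`-th block to `i_j`.  The variable with 1-based label
`i` is `x_i`, so the rational constant attached to `c s : Fin n` is `(c s : ℕ) + 1`. -/
noncomputable def Ppoly (n k : ℕ) (α : Fin k → ℕ) : MvPolynomial (Fin n) ℚ :=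
  ∑ c ∈ Finset.univ.filter (fun c : Fin k → Fin n => Monotone c),
    ∏ s : Fin k,
      if ∀ t, t < s → c t < c s then
        X (c s) ^ α s - C ((((c s : ℕ) : ℚ) + 1) ^ α s)
      else C ((-(((c s : ℕ) : ℚ) + 1)) ^ α s)

/-- The top-degree homogeneous component `h(f)`. -/
noncomputable def topHom {n : ℕ} (f : MvPolynomial (Fin n) ℚ) : MvPolynomial (Fin n) ℚ :=
  MvPolynomial.homogeneousComponent f.totalDegree f

/-- The set `QSV_n ⊆ S_n`. -/
def QSVset (n : ℕ) : Set (Equiv.Perm (Fin n)) := {σ | ∃ lam : NCP n, NCP.IsQ lam σ}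

/-- The point `(σ(1), …, σ(n)) ∈ ℚⁿ` associated to a permutation (1-based labels). -/
def permPoint {n : ℕ} (σ : Equiv.Perm (Fin n)) : Fin n → ℚ := fun i => ((σ i : ℕ) : ℚ) + 1

/-- `QSV_n` as a set of points in `ℚⁿ`. -/
def QSVpoints (n : ℕ) : Set (Fin n → ℚ) := {p | ∃ σ ∈ QSVset n, p = permPoint σ}

/-- The vanishing ideal of a set of points in `ℚⁿ`. -/
noncomputable def vanishingIdeal (n : ℕ) (S : Set (Fin n → ℚ)) :
    Ideal (MvPolynomial (Fin n) ℚ) where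
  carrier := {f | ∀ p ∈ S, MvPolynomial.eval p f = 0}
  add_mem' := by
    intro a b ha hb p hp
    simp [map_add, ha p hp, hb p hp]
  zero_mem' := by
    intro p hp
    simp
  smul_mem' := by
    intro c f hf p hp
    simp [smul_eq_mul, map_mul, hf p hp]

/-- The monomial quasisymmetric polynomials `M_α` for nonempty compositions `α`
with `ℓ(α) ≤ n`. -/
def MpolySet (n : ℕ) : Set (MvPolynomial (Fin n) ℚ) :=
  {f | ∃ k, ∃ α : Fin k → ℕ, 0 < k ∧ k ≤ n ∧ (∀ s, 0 < α s) ∧ f = Mpoly n k α}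

/-- The vanishing polynomials `P_α` for nonempty compositions `α` with `ℓ(α) ≤ n`. -/
def PpolySet (n : ℕ) : Set (MvPolynomial (Fin n) ℚ) :=
  {f | ∃ k, ∃ α : Fin k → ℕ, 0 < k ∧ k ≤ n ∧ (∀ s, 0 < α s) ∧ f = Ppoly n k α}

/-- The space `QSym_n` of quasisymmetric polynomials : the span of `1` and the `M_α`. -/
def QSym (n : ℕ) : Submodule ℚ (MvPolynomial (Fin n) ℚ) :=
  Submodule.span ℚ (insert 1 (MpolySet n))

/-- `QSym_n⁺` : quasisymmetric polynomials with zero constant term. -/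
def QSymPlus (n : ℕ) : Set (MvPolynomial (Fin n) ℚ) :=
  {f | f ∈ QSym n ∧ MvPolynomial.constantCoeff f = 0}

/-- `gr(I) = ⟨h(f) : f ∈ I⟩`. -/
noncomputable def grIdeal (n : ℕ) (I : Ideal (MvPolynomial (Fin n) ℚ)) :
    Ideal (MvPolynomial (Fin n) ℚ) :=
  Ideal.span (topHom '' (I : Set (MvPolynomial (Fin n) ℚ)))

namespace S11
open Finset

variable {n : ℕ}

noncomputable def dd (u : Equiv.Perm (Fin n)) (m x : ℕ) : ℕ :=
  (univ.filter (fun a : Fin n => (a : ℕ) < m ∧ ((u a : ℕ) < x))).card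

lemma sum_split_one (p : Fin n) (f : Fin n → ℕ) :
    ∑ a, f a = (∑ a ∈ univ.erase p, f a) + f p :=
  (Finset.sum_erase_add _ _ (mem_univ p)).symm

lemma sum_split_pair {p q : Fin n} (hne : p ≠ q) (f : Fin n → ℕ) :
    ∑ a, f a = (∑ a ∈ (univ.erase p).erase q, f a) + f p + f q := by
  have h1 : ∑ a ∈ univ.erase p, f a + f p = ∑ a, f a :=
    Finset.sum_erase_add _ _ (mem_univ p)
  have h2 : ∑ a ∈ (univ.erase p).erase q, f a + f q = ∑ a ∈ univ.erase p, f a :=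
    Finset.sum_erase_add _ _ (Finset.mem_erase.2 ⟨hne.symm, mem_univ q⟩)
  omega

lemma dd_eq_sum (u : Equiv.Perm (Fin n)) (m x : ℕ) :
    dd u m x = ∑ a : Fin n, (if (a : ℕ) < m ∧ ((u a : ℕ) < x) then 1 else 0) := by
  rw [dd, Finset.card_filter]

lemma val_ne_of_ne {a b : Fin n} (h : a ≠ b) : (a : ℕ) ≠ (b : ℕ) :=
  fun hv => h (Fin.val_injective hv)

lemma apply_val_ne {u : Equiv.Perm (Fin n)} {a b : Fin n} (h : a ≠ b) :
    ((u a : ℕ)) ≠ ((u b : ℕ)) :=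
  val_ne_of_ne (fun he => h (u.injective he))

lemma dd_succ_row (u : Equiv.Perm (Fin n)) (j : Fin n) (x : ℕ) :
    dd u ((j : ℕ) + 1) x = dd u (j : ℕ) x + (if (u j : ℕ) < x then 1 else 0) := by
  rw [dd_eq_sum, dd_eq_sum, sum_split_one j, sum_split_one j
    (f := fun a => if (a : ℕ) < (j : ℕ) ∧ ((u a : ℕ) < x) then 1 else 0)]
  have he : ∀ a ∈ univ.erase j,
      (if (a : ℕ) < (j : ℕ) + 1 ∧ ((u a : ℕ) < x) then 1 else 0)
        = (if (a : ℕ) < (j : ℕ) ∧ ((u a : ℕ) < x) then 1 else 0) := by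
    intro a ha
    have : (a : ℕ) ≠ (j : ℕ) := val_ne_of_ne (Finset.mem_erase.1 ha).1
    split_ifs <;> omega
  rw [Finset.sum_congr rfl he]
  split_ifs <;> omega

lemma dd_succ_col (u : Equiv.Perm (Fin n)) (m : ℕ) (v : Fin n) :
    dd u m ((v : ℕ) + 1) = dd u m (v : ℕ) + (if ((u⁻¹ v : Fin n) : ℕ) < m then 1 else 0) := by
  rw [dd_eq_sum, dd_eq_sum, sum_split_one (u⁻¹ v), sum_split_one (u⁻¹ v)
    (f := fun a => if (a : ℕ) < m ∧ ((u a : ℕ) < (v : ℕ)) then 1 else 0)]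
  have he : ∀ a ∈ univ.erase (u⁻¹ v),
      (if (a : ℕ) < m ∧ ((u a : ℕ) < (v : ℕ) + 1) then 1 else 0)
        = (if (a : ℕ) < m ∧ ((u a : ℕ) < (v : ℕ)) then 1 else 0) := by
    intro a ha
    have hne : u a ≠ v := by
      intro he
      exact (Finset.mem_erase.1 ha).1 (by rw [← he]; simp)
    have : (u a : ℕ) ≠ (v : ℕ) := val_ne_of_ne hne
    split_ifs <;> omega
  rw [Finset.sum_congr rfl he]
  have hv : u (u⁻¹ v) = v := by simp
  rw [hv]
  split_ifs <;> omega

lemma dd_split (u : Equiv.Perm (Fin n)) {m1 m2 : ℕ} (x : ℕ) (h : m1 ≤ m2) :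
    dd u m2 x = dd u m1 x
      + (univ.filter (fun a : Fin n => m1 ≤ (a : ℕ) ∧ (a : ℕ) < m2 ∧ ((u a : ℕ) < x))).card := by
  rw [dd_eq_sum, dd_eq_sum, Finset.card_filter, ← Finset.sum_add_distrib]
  refine Finset.sum_congr rfl (fun a _ => ?_)
  split_ifs <;> omega

lemma dd_swap (u : Equiv.Perm (Fin n)) {p q : Fin n} (hpq : p < q) (h : u p < u q)
    (m x : ℕ) :
    dd (u * Equiv.swap p q) m x
      + (if (p : ℕ) < m ∧ m ≤ (q : ℕ) ∧ (u p : ℕ) < x ∧ x ≤ (u q : ℕ) then 1 else 0)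
      = dd u m x := by
  have hne : p ≠ q := ne_of_lt hpq
  have hs : ∀ a, (u * Equiv.swap p q) a = u (Equiv.swap p q a) := fun a => rfl
  have hre : dd (u * Equiv.swap p q) m x
      = ∑ a : Fin n, (if ((Equiv.swap p q a : Fin n) : ℕ) < m ∧ ((u a : ℕ) < x) then 1 else 0) := by
    rw [dd_eq_sum]
    rw [← Equiv.sum_comp (Equiv.swap p q)
      (fun a => if ((Equiv.swap p q a : Fin n) : ℕ) < m ∧ ((u a : ℕ) < x) then 1 else 0)]
    refine Finset.sum_congr rfl (fun a _ => ?_)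
    rw [hs, Equiv.swap_apply_self]
  rw [hre, dd_eq_sum, sum_split_pair hne, sum_split_pair hne
    (f := fun a => if (a : ℕ) < m ∧ ((u a : ℕ) < x) then 1 else 0)]
  have he : ∀ a ∈ (univ.erase p).erase q,
      (if ((Equiv.swap p q a : Fin n) : ℕ) < m ∧ ((u a : ℕ) < x) then 1 else 0)
        = (if (a : ℕ) < m ∧ ((u a : ℕ) < x) then 1 else 0) := by
    intro a ha
    have h1 : a ≠ q := (Finset.mem_erase.1 ha).1
    have h2 : a ≠ p := (Finset.mem_erase.1 (Finset.mem_erase.1 ha).2).1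
    rw [Equiv.swap_apply_of_ne_of_ne h2 h1]
  rw [Finset.sum_congr rfl he, Equiv.swap_apply_left, Equiv.swap_apply_right]
  have hpq' : (p : ℕ) < (q : ℕ) := hpq
  have hupq : (u p : ℕ) < (u q : ℕ) := h
  split_ifs <;> omega

lemma dd_swap_le (u : Equiv.Perm (Fin n)) {p q : Fin n} (hpq : p < q) (h : u p < u q)
    (m x : ℕ) : dd (u * Equiv.swap p q) m x ≤ dd u m x := by
  have := dd_swap u hpq h m x
  omega

lemma card_val_lt (j : Fin n) :
    (univ.filter (fun a : Fin n => (a : ℕ) < (j : ℕ))).card = (j : ℕ) := by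
  have : (univ.filter (fun a : Fin n => (a : ℕ) < (j : ℕ))) = Finset.Iio j := by
    ext a
    simp only [Finset.mem_Iio, Finset.mem_filter, Finset.mem_univ, true_and, Fin.lt_def]
  rw [this, Fin.card_Iio]

lemma bruhatLen_eq (u : Equiv.Perm (Fin n)) :
    bruhatLen u + ∑ m : Fin n, dd u (m : ℕ) ((u m : ℕ)) = ∑ m : Fin n, (m : ℕ) := by
  have h1 : bruhatLen u
      = ∑ m : Fin n, (univ.filter (fun a : Fin n => (a : ℕ) < (m : ℕ) ∧ (u m : ℕ) < (u a : ℕ))).card := by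
    rw [bruhatLen, Finset.card_filter]
    rw [Fintype.sum_prod_type_right]
    refine Finset.sum_congr rfl (fun m _ => ?_)
    rw [Finset.card_filter]
    refine Finset.sum_congr rfl (fun a _ => ?_)
    refine if_congr ?_ rfl rfl
    exact Iff.rfl
  have key : ∀ m : Fin n,
      (univ.filter (fun a : Fin n => (a : ℕ) < (m : ℕ) ∧ (u m : ℕ) < (u a : ℕ))).card
        + dd u (m : ℕ) ((u m : ℕ)) = (m : ℕ) := by
    intro m
    have hstep : (univ.filter (fun a : Fin n => (a : ℕ) < (m : ℕ) ∧ (u m : ℕ) < (u a : ℕ))).card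
        + dd u (m : ℕ) ((u m : ℕ))
        = (univ.filter (fun a : Fin n => (a : ℕ) < (m : ℕ))).card := by
      rw [dd, Finset.card_filter, Finset.card_filter, Finset.card_filter,
        ← Finset.sum_add_distrib]
      refine Finset.sum_congr rfl (fun a _ => ?_)
      by_cases ham : a = m
      · subst ham
        split_ifs <;> omega
      · have h1 := apply_val_ne (u := u) ham
        have h2 := val_ne_of_ne ham
        split_ifs <;> omega
    rw [hstep, card_val_lt]
  rw [h1, ← Finset.sum_add_distrib]
  exact Finset.sum_congr rfl (fun m _ => key m)

lemma bruhatLen_swap_lt (u : Equiv.Perm (Fin n)) {p q : Fin n} (hpq : p < q)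
    (h : u p < u q) : bruhatLen u < bruhatLen (u * Equiv.swap p q) := by
  have hne : p ≠ q := ne_of_lt hpq
  set u' := u * Equiv.swap p q with hu'
  have hup : u' p = u q := by
    show u (Equiv.swap p q p) = u q
    rw [Equiv.swap_apply_left]
  have huq : u' q = u p := by
    show u (Equiv.swap p q q) = u p
    rw [Equiv.swap_apply_right]
  have hother : ∀ a, a ≠ p → a ≠ q → u' a = u a := by
    intro a h1 h2
    show u (Equiv.swap p q a) = u a
    rw [Equiv.swap_apply_of_ne_of_ne h1 h2]
  -- key numeric inequality
  have hA : dd u (q : ℕ) ((u p : ℕ))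
      = dd u (p : ℕ) ((u p : ℕ))
      + (univ.filter (fun a : Fin n => (p:ℕ) ≤ a ∧ (a:ℕ) < (q:ℕ) ∧ (u a : ℕ) < (u p : ℕ))).card :=
    dd_split u _ (le_of_lt hpq)
  have hB : dd u (q : ℕ) ((u q : ℕ))
      = dd u (p : ℕ) ((u q : ℕ))
      + (univ.filter (fun a : Fin n => (p:ℕ) ≤ a ∧ (a:ℕ) < (q:ℕ) ∧ (u a : ℕ) < (u q : ℕ))).card :=
    dd_split u _ (le_of_lt hpq)
  have hAB : (univ.filter (fun a : Fin n => (p:ℕ) ≤ a ∧ (a:ℕ) < (q:ℕ) ∧ (u a : ℕ) < (u p : ℕ))).card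
      < (univ.filter (fun a : Fin n => (p:ℕ) ≤ a ∧ (a:ℕ) < (q:ℕ) ∧ (u a : ℕ) < (u q : ℕ))).card := by
    apply Finset.card_lt_card
    rw [Finset.ssubset_iff_of_subset]
    · exact ⟨p, by
        simp only [Finset.mem_filter, mem_univ, true_and]
        exact ⟨⟨le_refl _, hpq, h⟩, fun hc => absurd hc.2.2 (lt_irrefl _)⟩⟩
    · intro a ha
      simp only [Finset.mem_filter, mem_univ, true_and] at ha ⊢
      exact ⟨ha.1, ha.2.1, lt_trans ha.2.2 h⟩
  -- compare diagonal sums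
  have hsum : ∑ m : Fin n, dd u' (m : ℕ) ((u' m : ℕ)) + 1 ≤ ∑ m : Fin n, dd u (m : ℕ) ((u m : ℕ)) := by
    rw [sum_split_pair hne (f := fun m => dd u' (m : ℕ) ((u' m : ℕ))),
      sum_split_pair hne (f := fun m => dd u (m : ℕ) ((u m : ℕ)))]
    have hmid : ∑ m ∈ (univ.erase p).erase q, dd u' (m : ℕ) ((u' m : ℕ))
        ≤ ∑ m ∈ (univ.erase p).erase q, dd u (m : ℕ) ((u m : ℕ)) := by
      refine Finset.sum_le_sum (fun m hm => ?_)
      have h1 : m ≠ q := (Finset.mem_erase.1 hm).1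
      have h2 : m ≠ p := (Finset.mem_erase.1 (Finset.mem_erase.1 hm).2).1
      rw [hother m h2 h1]
      exact dd_swap_le u hpq h _ _
    have hp' : dd u' (p : ℕ) ((u' p : ℕ)) = dd u (p : ℕ) ((u q : ℕ)) := by
      rw [hup]
      have := dd_swap u hpq h (p : ℕ) ((u q : ℕ))
      rw [← hu'] at this
      have hz : ¬((p:ℕ) < (p:ℕ) ∧ (p:ℕ) ≤ (q:ℕ) ∧ (u p : ℕ) < (u q : ℕ) ∧ (u q : ℕ) ≤ (u q : ℕ)) := by
        omega
      rw [if_neg hz] at this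
      omega
    have hq' : dd u' (q : ℕ) ((u' q : ℕ)) = dd u (q : ℕ) ((u p : ℕ)) := by
      rw [huq]
      have := dd_swap u hpq h (q : ℕ) ((u p : ℕ))
      rw [← hu'] at this
      have hupq : (u p : ℕ) < (u q : ℕ) := h
      have hz : ¬((p:ℕ) < (q:ℕ) ∧ (q:ℕ) ≤ (q:ℕ) ∧ (u p : ℕ) < (u p : ℕ) ∧ (u p : ℕ) ≤ (u q : ℕ)) := by
        omega
      rw [if_neg hz] at this
      omega
    omega
  have e1 := bruhatLen_eq u
  have e2 := bruhatLen_eq u'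
  omega

lemma bruhat_step (u : Equiv.Perm (Fin n)) {p q : Fin n} (hpq : p < q) (h : u p < u q) :
    ((u * Equiv.swap p q) * u⁻¹).IsSwap ∧ bruhatLen u < bruhatLen (u * Equiv.swap p q) := by
  constructor
  · refine ⟨u p, u q, fun hc => absurd hc (ne_of_lt h), ?_⟩
    have := Equiv.swap_apply_apply u p q
    rw [← this]
    done
  · exact bruhatLen_swap_lt u hpq h

lemma dd_anti {v w : Equiv.Perm (Fin n)} (h : BruhatLE v w) : ∀ m x, dd w m x ≤ dd v m x := by
  induction h with
  | refl => exact fun m x => le_refl _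
  | tail _ hbc ih =>
    rename_i b c _
    intro m x
    refine le_trans ?_ (ih m x)
    obtain ⟨⟨y, z, hyz, he⟩, hlen⟩ := hbc
    have hc : c = b * Equiv.swap (b⁻¹ y) (b⁻¹ z) := by
      have h1 : c = Equiv.swap y z * b := by
        have : c * b⁻¹ * b = Equiv.swap y z * b := by rw [he]
        group at this
        exact this
      have h2 : Equiv.swap y z = b * Equiv.swap (b⁻¹ y) (b⁻¹ z) * b⁻¹ := by
        have := Equiv.swap_apply_apply b (b⁻¹ y) (b⁻¹ z)
        simp at this
        rw [this]
        rfl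
      rw [h1, h2]
      group
    have hne : b⁻¹ y ≠ b⁻¹ z := fun hc' => hyz (by
      have := congrArg b hc'
      simpa using this)
    rcases lt_trichotomy (b⁻¹ y) (b⁻¹ z) with hlt | heq | hgt
    · set p := b⁻¹ y; set q := b⁻¹ z
      rcases lt_trichotomy (b p) (b q) with h1 | h2 | h3
      · rw [hc]; exact dd_swap_le b hlt h1 m x
      · exact absurd (b.injective h2) (ne_of_lt hlt)
      · exfalso
        have hcq : c (p) = b q := by rw [hc]; simp
        have hcp : c (q) = b p := by rw [hc]; simp
        have : c p < c q := by rw [hcq, hcp]; exact h3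
        have hback : c * Equiv.swap p q = b := by
          rw [hc, mul_assoc]
          simp
        have := bruhatLen_swap_lt c hlt this
        rw [hback] at this
        omega
    · exact absurd heq hne
    · set p := b⁻¹ z; set q := b⁻¹ y
      have hc2 : c = b * Equiv.swap p q := by rw [hc, Equiv.swap_comm]
      rcases lt_trichotomy (b p) (b q) with h1 | h2 | h3
      · rw [hc2]; exact dd_swap_le b hgt h1 m x
      · exact absurd (b.injective h2) (ne_of_lt hgt)
      · exfalso
        have hcq : c p = b q := by rw [hc2]; simp
        have hcp : c q = b p := by rw [hc2]; simp
        have : c p < c q := by rw [hcq, hcp]; exact h3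
        have hback : c * Equiv.swap p q = b := by
          rw [hc2, mul_assoc]; simp
        have := bruhatLen_swap_lt c hgt this
        rw [hback] at this
        omega

end S11

namespace S11
open Finset
variable {n : ℕ}

lemma dd_prefix_eq {v w : Equiv.Perm (Fin n)} {j : ℕ}
    (h : ∀ a : Fin n, (a : ℕ) < j → v a = w a) (x : ℕ) : dd v j x = dd w j x := by
  rw [dd, dd]
  congr 1
  apply Finset.filter_congr
  intro a _
  by_cases ha : (a : ℕ) < j
  · rw [h a ha]
  · simp only [ha, false_and]

lemma perm_eq_of_dd_eq {v w : Equiv.Perm (Fin n)} (h : ∀ m x, dd v m x = dd w m x) :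
    v = w := by
  apply Equiv.ext
  intro j
  have h1 := dd_succ_row v j ((v j : ℕ) + 1)
  have h2 := dd_succ_row w j ((v j : ℕ) + 1)
  have h3 := dd_succ_row v j ((w j : ℕ) + 1)
  have h4 := dd_succ_row w j ((w j : ℕ) + 1)
  have e1 := h ((j : ℕ) + 1) ((v j : ℕ) + 1)
  have e2 := h (j : ℕ) ((v j : ℕ) + 1)
  have e3 := h ((j : ℕ) + 1) ((w j : ℕ) + 1)
  have e4 := h (j : ℕ) ((w j : ℕ) + 1)
  have : (v j : ℕ) = (w j : ℕ) := by
    split_ifs at h1 h2 h3 h4 <;> omega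
  exact Fin.val_injective this

lemma measure_lt {v v' : Equiv.Perm (Fin n)} (hle : ∀ m x, dd v' m x ≤ dd v m x)
    {m0 x0 : ℕ} (hm0 : m0 ≤ n) (hx0 : x0 ≤ n) (hstrict : dd v' m0 x0 < dd v m0 x0) :
    ∑ m ∈ Finset.range (n+1), ∑ x ∈ Finset.range (n+1), dd v' m x
      < ∑ m ∈ Finset.range (n+1), ∑ x ∈ Finset.range (n+1), dd v m x := by
  apply Finset.sum_lt_sum
  · intro m _
    exact Finset.sum_le_sum (fun x _ => hle m x)
  · refine ⟨m0, Finset.mem_range.2 (by omega), ?_⟩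
    apply Finset.sum_lt_sum
    · intro x _
      exact hle m0 x
    · exact ⟨x0, Finset.mem_range.2 (by omega), hstrict⟩

lemma bruhatLE_of_dd : ∀ (k : ℕ) (v w : Equiv.Perm (Fin n)),
    (∑ m ∈ Finset.range (n+1), ∑ x ∈ Finset.range (n+1), dd v m x) = k →
    (∀ m x, dd w m x ≤ dd v m x) → BruhatLE v w := by
  intro k
  induction k using Nat.strong_induction_on with
  | _ k IH =>
    intro v w hk h
    by_cases hvw : v = w
    · subst hvw; exact Relation.ReflTransGen.refl
    -- least disagreement
    have hD : (univ.filter (fun a : Fin n => v a ≠ w a)).Nonempty := by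
      by_contra hc
      rw [Finset.not_nonempty_iff_eq_empty] at hc
      apply hvw
      apply Equiv.ext
      intro a
      by_contra hne
      have : a ∈ univ.filter (fun a : Fin n => v a ≠ w a) := by
        simp only [Finset.mem_filter, mem_univ, true_and]; exact hne
      rw [hc] at this
      exact absurd this (Finset.notMem_empty a)
    set j := (univ.filter (fun a : Fin n => v a ≠ w a)).min' hD with hj
    have hjmem : v j ≠ w j := by
      have := Finset.min'_mem _ hD
      rw [← hj] at this
      exact (Finset.mem_filter.1 this).2
    have hjmin : ∀ a : Fin n, (a : ℕ) < (j : ℕ) → v a = w a := by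
      intro a ha
      by_contra hne
      have hmem : a ∈ univ.filter (fun a : Fin n => v a ≠ w a) := by
        simp only [Finset.mem_filter, mem_univ, true_and]; exact hne
      have := Finset.min'_le _ _ hmem
      rw [← hj] at this
      exact absurd ha (by omega)
    have hpre : ∀ x, dd v (j : ℕ) x = dd w (j : ℕ) x := fun x => dd_prefix_eq hjmin x
    -- v j < w j
    have hvwj : (v j : ℕ) < (w j : ℕ) := by
      have h1 := dd_succ_row v j ((w j : ℕ) + 1)
      have h2 := dd_succ_row w j ((w j : ℕ) + 1)
      have h3 := h ((j : ℕ) + 1) ((w j : ℕ) + 1)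
      have h4 := hpre ((w j : ℕ) + 1)
      have hne : (v j : ℕ) ≠ (w j : ℕ) := val_ne_of_ne hjmem
      split_ifs at h1 h2 <;> omega
    -- the set S
    have hS : (univ.filter (fun a : Fin n =>
        (j : ℕ) < (a : ℕ) ∧ (v j : ℕ) < (v a : ℕ) ∧ (v a : ℕ) ≤ (w j : ℕ))).Nonempty := by
      refine ⟨v⁻¹ (w j), ?_⟩
      simp only [Finset.mem_filter, mem_univ, true_and]
      have hval : v (v⁻¹ (w j)) = w j := by simp
      have hne : v⁻¹ (w j) ≠ j := by
        intro hc
        rw [hc] at hval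
        exact hjmem hval
      have hgt : (j : ℕ) < ((v⁻¹ (w j) : Fin n) : ℕ) := by
        rcases lt_or_gt_of_ne (val_ne_of_ne hne) with h1 | h1
        · exfalso
          have := hjmin _ h1
          rw [hval] at this
          have : w (v⁻¹ (w j)) = w j := this.symm
          exact hne (w.injective this)
        · exact h1
      rw [hval]
      exact ⟨hgt, hvwj, le_refl _⟩
    set jp := (univ.filter (fun a : Fin n =>
        (j : ℕ) < (a : ℕ) ∧ (v j : ℕ) < (v a : ℕ) ∧ (v a : ℕ) ≤ (w j : ℕ))).min' hS with hjp
    have hjpmem := Finset.min'_mem _ hS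
    rw [← hjp] at hjpmem
    simp only [Finset.mem_filter, mem_univ, true_and] at hjpmem
    obtain ⟨hjjp, hvjjp, hjple⟩ := hjpmem
    have hjplt : j < jp := hjjp
    have hvjlt : v j < v jp := hvjjp
    -- dichotomy
    have hdich : ∀ a : Fin n, (j : ℕ) < (a : ℕ) → (a : ℕ) < (jp : ℕ) →
        (v a : ℕ) < (v j : ℕ) ∨ (w j : ℕ) < (v a : ℕ) := by
      intro a h1 h2
      by_contra hc
      push_neg at hc
      have hne : a ≠ j := by
        intro hc'; subst hc'; omega
      have hvne : (v a : ℕ) ≠ (v j : ℕ) := apply_val_ne hne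
      have hmem : a ∈ univ.filter (fun a : Fin n =>
          (j : ℕ) < (a : ℕ) ∧ (v j : ℕ) < (v a : ℕ) ∧ (v a : ℕ) ≤ (w j : ℕ)) := by
        simp only [Finset.mem_filter, mem_univ, true_and]
        exact ⟨h1, by omega, hc.2⟩
      have := Finset.min'_le _ _ hmem
      rw [← hjp] at this
      have : (jp : ℕ) ≤ (a : ℕ) := this
      omega
    -- key violation bound
    have hkey : ∀ m x : ℕ, (j : ℕ) < m → m ≤ (jp : ℕ) → (v j : ℕ) < x → x ≤ (v jp : ℕ) →
        dd w m x < dd v m x := by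
      intro m x hm1 hm2 hx1 hx2
      have hjm : (j : ℕ) ≤ m := le_of_lt hm1
      set X := (w j : ℕ) + 1 with hX
      -- (1)
      have h1 : dd v m X = dd v (j : ℕ) X + 1
          + (univ.filter (fun a : Fin n =>
              (j:ℕ) < (a:ℕ) ∧ (a:ℕ) < m ∧ (v a : ℕ) < (v j : ℕ))).card := by
        rw [dd_split v X hjm]
        have hset : (univ.filter (fun a : Fin n => (j:ℕ) ≤ (a:ℕ) ∧ (a:ℕ) < m ∧ (v a : ℕ) < X))
            = insert j (univ.filter (fun a : Fin n =>
                (j:ℕ) < (a:ℕ) ∧ (a:ℕ) < m ∧ (v a : ℕ) < (v j : ℕ))) := by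
          ext a
          simp only [Finset.mem_filter, mem_univ, true_and, Finset.mem_insert]
          constructor
          · rintro ⟨ha1, ha2, ha3⟩
            by_cases haj : a = j
            · exact Or.inl haj
            · right
              have hlt : (j:ℕ) < (a:ℕ) := lt_of_le_of_ne ha1 (val_ne_of_ne haj).symm
              rcases hdich a hlt (by omega) with hd | hd
              · exact ⟨hlt, ha2, hd⟩
              · omega
          · rintro (rfl | ⟨ha1, ha2, ha3⟩)
            · exact ⟨le_refl _, by omega, by omega⟩
            · exact ⟨by omega, ha2, by omega⟩
        rw [hset, Finset.card_insert_of_notMem]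
        · omega
        · simp only [Finset.mem_filter, mem_univ, true_and]
          intro hc
          omega
      -- (2)
      have h2 : dd w m X = dd w (j : ℕ) X + 1
          + (univ.filter (fun a : Fin n =>
              (j:ℕ) < (a:ℕ) ∧ (a:ℕ) < m ∧ (w a : ℕ) < X)).card := by
        rw [dd_split w X hjm]
        have hset : (univ.filter (fun a : Fin n => (j:ℕ) ≤ (a:ℕ) ∧ (a:ℕ) < m ∧ (w a : ℕ) < X))
            = insert j (univ.filter (fun a : Fin n =>
                (j:ℕ) < (a:ℕ) ∧ (a:ℕ) < m ∧ (w a : ℕ) < X)) := by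
          ext a
          simp only [Finset.mem_filter, mem_univ, true_and, Finset.mem_insert]
          constructor
          · rintro ⟨ha1, ha2, ha3⟩
            by_cases haj : a = j
            · exact Or.inl haj
            · right
              have hlt : (j:ℕ) < (a:ℕ) := lt_of_le_of_ne ha1 (val_ne_of_ne haj).symm
              exact ⟨hlt, ha2, ha3⟩
          · rintro (rfl | ⟨ha1, ha2, ha3⟩)
            · exact ⟨le_refl _, by omega, by omega⟩
            · exact ⟨by omega, ha2, ha3⟩
        rw [hset, Finset.card_insert_of_notMem]
        · omega
        · simp only [Finset.mem_filter, mem_univ, true_and]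
          intro hc
          omega
      -- (3)
      have h3 : (univ.filter (fun a : Fin n =>
            (j:ℕ) < (a:ℕ) ∧ (a:ℕ) < m ∧ (w a : ℕ) < X)).card
          ≤ (univ.filter (fun a : Fin n =>
            (j:ℕ) < (a:ℕ) ∧ (a:ℕ) < m ∧ (v a : ℕ) < (v j : ℕ))).card := by
        have hh := h m X
        have hp := hpre X
        omega
      -- (4) dd w m x
      have h4 : dd w m x ≤ dd w (j : ℕ) x
          + (univ.filter (fun a : Fin n =>
              (j:ℕ) < (a:ℕ) ∧ (a:ℕ) < m ∧ (w a : ℕ) < X)).card := by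
        rw [dd_split w x hjm]
        have hsub : (univ.filter (fun a : Fin n => (j:ℕ) ≤ (a:ℕ) ∧ (a:ℕ) < m ∧ (w a : ℕ) < x))
            ⊆ (univ.filter (fun a : Fin n =>
              (j:ℕ) < (a:ℕ) ∧ (a:ℕ) < m ∧ (w a : ℕ) < X)) := by
          intro a ha
          simp only [Finset.mem_filter, mem_univ, true_and] at ha ⊢
          have haj : a ≠ j := by
            intro hc; subst hc
            omega
          have : (j:ℕ) < (a:ℕ) := lt_of_le_of_ne ha.1 (val_ne_of_ne haj).symm
          exact ⟨this, ha.2.1, by omega⟩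
        have := Finset.card_le_card hsub
        omega
      -- (5)
      have h5 : dd v (j : ℕ) x + 1
          + (univ.filter (fun a : Fin n =>
              (j:ℕ) < (a:ℕ) ∧ (a:ℕ) < m ∧ (v a : ℕ) < (v j : ℕ))).card ≤ dd v m x := by
        rw [dd_split v x hjm]
        have hsub : insert j (univ.filter (fun a : Fin n =>
                (j:ℕ) < (a:ℕ) ∧ (a:ℕ) < m ∧ (v a : ℕ) < (v j : ℕ)))
            ⊆ (univ.filter (fun a : Fin n => (j:ℕ) ≤ (a:ℕ) ∧ (a:ℕ) < m ∧ (v a : ℕ) < x)) := by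
          intro a ha
          rcases Finset.mem_insert.1 ha with rfl | ha
          · simp only [Finset.mem_filter, mem_univ, true_and]
            exact ⟨le_refl _, by omega, by omega⟩
          · simp only [Finset.mem_filter, mem_univ, true_and] at ha ⊢
            exact ⟨by omega, ha.2.1, by omega⟩
        have hcard := Finset.card_le_card hsub
        rw [Finset.card_insert_of_notMem (by
          simp only [Finset.mem_filter, mem_univ, true_and]
          intro hc
          omega)] at hcard
        omega
      have h6 := hpre x
      omega
    -- the new permutation
    set v' := v * Equiv.swap j jp with hv'
    have hd' : ∀ m x, dd w m x ≤ dd v' m x := by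
      intro m x
      have hsw := dd_swap v hjplt hvjlt m x
      rw [← hv'] at hsw
      by_cases hc : (j : ℕ) < m ∧ m ≤ (jp : ℕ) ∧ (v j : ℕ) < x ∧ x ≤ (v jp : ℕ)
      · rw [if_pos hc] at hsw
        have := hkey m x hc.1 hc.2.1 hc.2.2.1 hc.2.2.2
        omega
      · rw [if_neg hc] at hsw
        have := h m x
        omega
    have hlt' : ∀ m x, dd v' m x ≤ dd v m x := by
      intro m x
      have hsw := dd_swap v hjplt hvjlt m x
      rw [← hv'] at hsw
      omega
    have hstrict : dd v' ((j:ℕ)+1) ((v j : ℕ)+1) < dd v ((j:ℕ)+1) ((v j : ℕ)+1) := by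
      have hsw := dd_swap v hjplt hvjlt ((j:ℕ)+1) ((v j : ℕ)+1)
      rw [← hv'] at hsw
      have hc : (j : ℕ) < (j:ℕ)+1 ∧ (j:ℕ)+1 ≤ (jp : ℕ) ∧ (v j : ℕ) < (v j : ℕ)+1
          ∧ (v j : ℕ)+1 ≤ (v jp : ℕ) := by
        have h1 : (j : ℕ) < (jp : ℕ) := hjjp
        have h2 : (v j : ℕ) < (v jp : ℕ) := hvjjp
        omega
      rw [if_pos hc] at hsw
      omega
    have hmeas := measure_lt hlt' (by omega : ((j:ℕ)+1) ≤ n) (by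
        have : (v j : ℕ) < n := (v j).isLt
        omega) hstrict
    rw [hk] at hmeas
    have step : ((v' * v⁻¹).IsSwap ∧ bruhatLen v < bruhatLen v') := by
      have := bruhat_step v hjplt hvjlt
      rw [← hv'] at this
      exact this
    exact Relation.ReflTransGen.head ⟨step.1, step.2⟩
      (IH _ hmeas v' w rfl hd')

end S11





namespace S11
open Finset NCP
variable {n : ℕ} (lam : NCP n)

lemma arc_lt {p : Fin n × Fin n} (hp : p ∈ lam.1) : (p.1 : ℕ) < (p.2 : ℕ) :=
  lam.2.1 p hp

lemma arc_left_unique {i j j' : Fin n} (h1 : (i, j) ∈ lam.1) (h2 : (i, j') ∈ lam.1) :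
    j = j' := by
  by_contra hne
  have hne' : ((i, j) : Fin n × Fin n) ≠ (i, j') := by
    intro hc
    exact hne (congrArg Prod.snd hc)
  have l1 : (i : ℕ) < (j : ℕ) := arc_lt lam h1
  have l2 : (i : ℕ) < (j' : ℕ) := arc_lt lam h2
  rcases lt_trichotomy (j : ℕ) (j' : ℕ) with h | h | h
  · exact lam.2.2 _ h1 _ h2 hne' ⟨le_refl _, l1, h.le⟩
  · exact hne (Fin.val_injective h)
  · exact lam.2.2 _ h2 _ h1 hne'.symm ⟨le_refl _, l2, h.le⟩

lemma arc_right_unique {i i' j : Fin n} (h1 : (i, j) ∈ lam.1) (h2 : (i', j) ∈ lam.1) :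
    i = i' := by
  by_contra hne
  have hne' : ((i, j) : Fin n × Fin n) ≠ (i', j) := by
    intro hc
    exact hne (congrArg Prod.fst hc)
  have l1 : (i : ℕ) < (j : ℕ) := arc_lt lam h1
  have l2 : (i' : ℕ) < (j : ℕ) := arc_lt lam h2
  rcases lt_trichotomy (i : ℕ) (i' : ℕ) with h | h | h
  · exact lam.2.2 _ h1 _ h2 hne' ⟨h.le, l2, le_refl _⟩
  · exact hne (Fin.val_injective h)
  · exact lam.2.2 _ h2 _ h1 hne'.symm ⟨h.le, l1, le_refl _⟩

lemma mem_lpos {i : Fin n} : i ∈ lpos lam ↔ ∃ j, (i, j) ∈ lam.1 := by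
  unfold lpos
  rw [Finset.mem_image]
  constructor
  · rintro ⟨p, hp, rfl⟩
    exact ⟨p.2, hp⟩
  · rintro ⟨j, hj⟩
    exact ⟨(i, j), hj, rfl⟩

lemma mem_rpos {j : Fin n} : j ∈ rpos lam ↔ ∃ i, (i, j) ∈ lam.1 := by
  unfold rpos
  rw [Finset.mem_image]
  constructor
  · rintro ⟨p, hp, rfl⟩
    exact ⟨p.1, hp⟩
  · rintro ⟨i, hi⟩
    exact ⟨(i, j), hi, rfl⟩

noncomputable def rfun (lam : NCP n) (i : Fin n) : Fin n :=
  if h : ∃ j, (i, j) ∈ lam.1 then h.choose else i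

lemma rfun_mem {i : Fin n} (h : i ∈ lpos lam) : (i, rfun lam i) ∈ lam.1 := by
  rw [mem_lpos] at h
  rw [rfun, dif_pos h]
  exact h.choose_spec

lemma rfun_eq {i j : Fin n} (h : (i, j) ∈ lam.1) : rfun lam i = j :=
  arc_left_unique lam (rfun_mem lam ((mem_lpos lam).2 ⟨j, h⟩)) h

lemma rfun_self {i : Fin n} (h : i ∉ lpos lam) : rfun lam i = i := by
  rw [rfun, dif_neg]
  intro hc
  exact h ((mem_lpos lam).2 hc)

lemma rfun_gt {i : Fin n} (h : i ∈ lpos lam) : (i : ℕ) < (rfun lam i : ℕ) :=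
  arc_lt lam (rfun_mem lam h)

noncomputable def pfun (lam : NCP n) (j : Fin n) : Fin n :=
  if h : ∃ i, (i, j) ∈ lam.1 then h.choose else j

lemma pfun_mem {j : Fin n} (h : j ∈ rpos lam) : (pfun lam j, j) ∈ lam.1 := by
  rw [mem_rpos] at h
  rw [pfun, dif_pos h]
  exact h.choose_spec

lemma pfun_eq {i j : Fin n} (h : (i, j) ∈ lam.1) : pfun lam j = i :=
  arc_right_unique lam (pfun_mem lam ((mem_rpos lam).2 ⟨i, h⟩)) h

lemma pfun_self {j : Fin n} (h : j ∉ rpos lam) : pfun lam j = j := by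
  rw [pfun, dif_neg]
  intro hc
  exact h ((mem_rpos lam).2 hc)

lemma pfun_lt {j : Fin n} (h : j ∈ rpos lam) : (pfun lam j : ℕ) < (j : ℕ) :=
  arc_lt lam (pfun_mem lam h)

lemma connected_refl (a : Fin n) : Connected lam a a := Relation.ReflTransGen.refl

lemma connected_trans {a b c : Fin n} (h1 : Connected lam a b) (h2 : Connected lam b c) :
    Connected lam a c := Relation.ReflTransGen.trans h1 h2

lemma connected_symm {a b : Fin n} (h : Connected lam a b) : Connected lam b a := by
  have hsym : Symmetric (fun x y : Fin n => (x, y) ∈ lam.1 ∨ (y, x) ∈ lam.1) := by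
    intro x y hxy
    exact hxy.symm
  exact (@Relation.ReflTransGen.stdSymm _ _ ⟨fun a b hab => hsym hab⟩).symm _ _ h

lemma connected_arc {i j : Fin n} (h : (i, j) ∈ lam.1) : Connected lam i j :=
  Relation.ReflTransGen.single (Or.inl h)

noncomputable def Mfun (lam : NCP n) (j : Fin n) : Fin n :=
  if h : ∃ k, (j, k) ∈ lam.1 then Mfun lam h.choose else j
termination_by (n - (j : ℕ))
decreasing_by
  have hlt : (j : ℕ) < ((h.choose : Fin n) : ℕ) := lam.2.1 _ h.choose_spec
  have := (h.choose : Fin n).isLt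
  omega

lemma Mfun_of_lpos {i : Fin n} (h : i ∈ lpos lam) : Mfun lam i = Mfun lam (rfun lam i) := by
  rw [mem_lpos] at h
  rw [Mfun, dif_pos h]
  congr 1
  exact (rfun_eq lam h.choose_spec).symm

lemma Mfun_of_not_lpos {i : Fin n} (h : i ∉ lpos lam) : Mfun lam i = i := by
  rw [Mfun, dif_neg]
  intro hc
  exact h ((mem_lpos lam).2 hc)

noncomputable def Pfun (lam : NCP n) (j : Fin n) : Fin n :=
  if h : ∃ i, (i, j) ∈ lam.1 then Pfun lam h.choose else j
termination_by ((j : ℕ))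
decreasing_by
  have hlt : ((h.choose : Fin n) : ℕ) < (j : ℕ) := lam.2.1 _ h.choose_spec
  omega

lemma Pfun_of_rpos {j : Fin n} (h : j ∈ rpos lam) : Pfun lam j = Pfun lam (pfun lam j) := by
  rw [mem_rpos] at h
  rw [Pfun, dif_pos h]
  congr 1
  exact (pfun_eq lam h.choose_spec).symm

lemma Pfun_of_not_rpos {j : Fin n} (h : j ∉ rpos lam) : Pfun lam j = j := by
  rw [Pfun, dif_neg]
  intro hc
  exact h ((mem_rpos lam).2 hc)

lemma Mfun_props : ∀ (k : ℕ) (j : Fin n), n - (j : ℕ) ≤ k →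
    (Mfun lam j ∉ lpos lam ∧ (j : ℕ) ≤ (Mfun lam j : ℕ) ∧ Connected lam j (Mfun lam j)) := by
  intro k
  induction k with
  | zero =>
    intro j hj
    have := j.isLt
    omega
  | succ k IH =>
    intro j hj
    by_cases h : j ∈ lpos lam
    · have hr := rfun_gt lam h
      have hrec := IH (rfun lam j) (by omega)
      rw [Mfun_of_lpos lam h]
      refine ⟨hrec.1, by omega, ?_⟩
      exact connected_trans lam (connected_arc lam (rfun_mem lam h)) hrec.2.2
    · rw [Mfun_of_not_lpos lam h]
      exact ⟨h, le_refl _, connected_refl lam j⟩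

lemma Mfun_not_lpos (j : Fin n) : Mfun lam j ∉ lpos lam :=
  (Mfun_props lam (n - (j : ℕ)) j (le_refl _)).1

lemma Mfun_ge (j : Fin n) : (j : ℕ) ≤ (Mfun lam j : ℕ) :=
  (Mfun_props lam (n - (j : ℕ)) j (le_refl _)).2.1

lemma Mfun_connected (j : Fin n) : Connected lam j (Mfun lam j) :=
  (Mfun_props lam (n - (j : ℕ)) j (le_refl _)).2.2

lemma Pfun_props : ∀ (k : ℕ) (j : Fin n), (j : ℕ) ≤ k →
    (Pfun lam j ∉ rpos lam ∧ (Pfun lam j : ℕ) ≤ (j : ℕ) ∧ Connected lam j (Pfun lam j)) := by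
  intro k
  induction k with
  | zero =>
    intro j hj
    by_cases h : j ∈ rpos lam
    · have := pfun_lt lam h
      omega
    · rw [Pfun_of_not_rpos lam h]
      exact ⟨h, le_refl _, connected_refl lam j⟩
  | succ k IH =>
    intro j hj
    by_cases h : j ∈ rpos lam
    · have hr := pfun_lt lam h
      have hrec := IH (pfun lam j) (by omega)
      rw [Pfun_of_rpos lam h]
      refine ⟨hrec.1, by omega, ?_⟩
      refine connected_trans lam ?_ hrec.2.2
      exact connected_symm lam (connected_arc lam (pfun_mem lam h))
    · rw [Pfun_of_not_rpos lam h]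
      exact ⟨h, le_refl _, connected_refl lam j⟩

lemma Pfun_not_rpos (j : Fin n) : Pfun lam j ∉ rpos lam :=
  (Pfun_props lam (j : ℕ) j (le_refl _)).1

lemma Pfun_le (j : Fin n) : (Pfun lam j : ℕ) ≤ (j : ℕ) :=
  (Pfun_props lam (j : ℕ) j (le_refl _)).2.1

lemma Pfun_connected (j : Fin n) : Connected lam j (Pfun lam j) :=
  (Pfun_props lam (j : ℕ) j (le_refl _)).2.2

lemma Mfun_step {a b : Fin n} (h : (a, b) ∈ lam.1 ∨ (b, a) ∈ lam.1) :
    Mfun lam a = Mfun lam b := by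
  rcases h with h | h
  · rw [Mfun_of_lpos lam ((mem_lpos lam).2 ⟨b, h⟩), rfun_eq lam h]
  · rw [Mfun_of_lpos lam ((mem_lpos lam).2 ⟨a, h⟩), rfun_eq lam h]

lemma Mfun_eq_of_connected {a b : Fin n} (h : Connected lam a b) :
    Mfun lam a = Mfun lam b := by
  induction h with
  | refl => rfl
  | tail _ hstep ih => rw [ih, Mfun_step lam hstep]

lemma Pfun_step {a b : Fin n} (h : (a, b) ∈ lam.1 ∨ (b, a) ∈ lam.1) :
    Pfun lam a = Pfun lam b := by
  rcases h with h | h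
  · rw [Pfun_of_rpos lam ((mem_rpos lam).2 ⟨a, h⟩), pfun_eq lam h]
  · rw [Pfun_of_rpos (j := a) lam ((mem_rpos lam).2 ⟨b, h⟩), pfun_eq lam h]

lemma Pfun_eq_of_connected {a b : Fin n} (h : Connected lam a b) :
    Pfun lam a = Pfun lam b := by
  induction h with
  | refl => rfl
  | tail _ hstep ih => rw [ih, Pfun_step lam hstep]

lemma not_connected_of_ne_mins {a a' : Fin n} (ha : a ∉ rpos lam) (ha' : a' ∉ rpos lam)
    (hne : a ≠ a') : ¬ Connected lam a a' := by
  intro hc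
  have := Pfun_eq_of_connected lam hc
  rw [Pfun_of_not_rpos lam ha, Pfun_of_not_rpos lam ha'] at this
  exact hne this

lemma compMax_eq_Mfun (j : Fin n) : compMax lam j = Mfun lam j := by
  apply le_antisymm
  · apply Finset.max'_le
    intro y hy
    have hcon : Connected lam j y := (Finset.mem_filter.1 hy).2
    have h1 : Mfun lam y = Mfun lam j := (Mfun_eq_of_connected lam hcon).symm
    have h2 : (y : ℕ) ≤ (Mfun lam y : ℕ) := Mfun_ge lam y
    rw [h1] at h2
    exact h2
  · apply Finset.le_max'
    exact Finset.mem_filter.2 ⟨mem_univ _, Mfun_connected lam j⟩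

lemma straddleM : ∀ (k : ℕ) (c t : Fin n), n - (c : ℕ) ≤ k →
    (c : ℕ) < (t : ℕ) → (t : ℕ) < (Mfun lam c : ℕ) → ¬ Connected lam c t →
    ∃ z1 z2 : Fin n, (z1, z2) ∈ lam.1 ∧ (c : ℕ) ≤ (z1 : ℕ) ∧ (z1 : ℕ) < (t : ℕ)
      ∧ (t : ℕ) < (z2 : ℕ) ∧ Connected lam c z2 := by
  intro k
  induction k with
  | zero =>
    intro c t hk
    have := c.isLt
    omega
  | succ k IH =>
    intro c t hk hct htM hncon
    by_cases hc : c ∈ lpos lam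
    · have harc := rfun_mem lam hc
      have hrgt := rfun_gt lam hc
      have hrne : rfun lam c ≠ t := by
        intro he
        exact hncon (he ▸ connected_arc lam harc)
      rcases lt_or_gt_of_ne (val_ne_of_ne hrne) with hlt | hgt
      · -- recurse
        have hMeq : Mfun lam (rfun lam c) = Mfun lam c := (Mfun_step lam (Or.inl harc)).symm
        have hncon' : ¬ Connected lam (rfun lam c) t := by
          intro hcon
          exact hncon (connected_trans lam (connected_arc lam harc) hcon)
        obtain ⟨z1, z2, hz, h1, h2, h3, h4⟩ :=
          IH (rfun lam c) t (by omega) hlt (by rw [hMeq]; exact htM) hncon'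
        exact ⟨z1, z2, hz, by omega, h2, h3,
          connected_trans lam (connected_arc lam harc) h4⟩
      · exact ⟨c, rfun lam c, harc, le_refl _, hct, hgt, connected_arc lam harc⟩
    · rw [Mfun_of_not_lpos lam hc] at htM
      omega

lemma comps_noncross {a a' : Fin n} (ha : a ∉ rpos lam) (ha' : a' ∉ rpos lam)
    (hne : a ≠ a') :
    ¬((a : ℕ) ≤ (a' : ℕ) ∧ (a' : ℕ) ≤ (Mfun lam a : ℕ)
      ∧ (Mfun lam a : ℕ) ≤ (Mfun lam a' : ℕ)) := by
  rintro ⟨h1, h2, h3⟩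
  have hnc : ¬ Connected lam a a' := not_connected_of_ne_mins lam ha ha' hne
  have hlt1 : (a : ℕ) < (a' : ℕ) := lt_of_le_of_ne h1 (val_ne_of_ne hne)
  -- a' ≠ Mfun a
  have hne2 : (a' : ℕ) ≠ (Mfun lam a : ℕ) := by
    intro he
    have heq : a' = Mfun lam a := Fin.val_injective he
    exact hnc (heq ▸ Mfun_connected lam a)
  have hlt2 : (a' : ℕ) < (Mfun lam a : ℕ) := lt_of_le_of_ne h2 hne2
  -- Mfun a ≠ Mfun a'
  have hne3 : (Mfun lam a : ℕ) ≠ (Mfun lam a' : ℕ) := by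
    intro he
    have heq : Mfun lam a = Mfun lam a' := Fin.val_injective he
    exact hnc (connected_trans lam (Mfun_connected lam a)
      (heq ▸ connected_symm lam (Mfun_connected lam a')))
  have hlt3 : (Mfun lam a : ℕ) < (Mfun lam a' : ℕ) := lt_of_le_of_ne h3 hne3
  -- first straddle: comp(a) over t := a'
  obtain ⟨z1, z2, hz, hz1, hz2, hz3, hz4⟩ :=
    straddleM lam (n - (a : ℕ)) a a' (le_refl _) hlt1 hlt2 hnc
  have hz2M : (z2 : ℕ) ≤ (Mfun lam a : ℕ) := by
    have := Mfun_ge lam z2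
    rw [Mfun_eq_of_connected lam (connected_symm lam hz4)] at this
    exact this
  -- second straddle: comp(a') over t' := z2
  have hncz : ¬ Connected lam a' z2 := by
    intro hcon
    exact hnc (connected_trans lam hz4 (connected_symm lam hcon))
  obtain ⟨y1, y2, hy, hy1, hy2, hy3, hy4⟩ :=
    straddleM lam (n - (a' : ℕ)) a' z2 (le_refl _) hz3 (by omega) hncz
  -- crossing contradiction
  have hpq : ((z1, z2) : Fin n × Fin n) ≠ (y1, y2) := by
    intro hc
    have : (z2 : ℕ) = (y2 : ℕ) := congrArg (fun p : Fin n × Fin n => ((p.2 : ℕ))) hc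
    omega
  refine lam.2.2 _ hz _ hy hpq ⟨?_, ?_, ?_⟩
  · show (z1 : ℕ) ≤ (y1 : ℕ)
    omega
  · show (y1 : ℕ) < (z2 : ℕ)
    omega
  · show (z2 : ℕ) ≤ (y2 : ℕ)
    omega

end S11

namespace S11
open Finset

lemma AL : ∀ (hi : ℕ) (lo : ℕ) (I B : Finset (ℕ × ℕ)),
    (∀ p ∈ I, p.1 ≤ p.2) →
    (∀ p ∈ I, ∀ q ∈ I, p ≠ q → ¬(p.1 ≤ q.1 ∧ q.1 < p.2 ∧ p.2 ≤ q.2)) →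
    (∀ τ ∈ B, lo ≤ τ.1 ∧ τ.1 ≤ τ.2 ∧ τ.2 < hi) →
    (∀ τ ∈ B, ∃ α ∈ I, α.1 = τ.1) →
    (∀ τ ∈ B, ∃ α ∈ I, α.2 = τ.2) →
    (∀ τ ∈ B, ∀ τ' ∈ B, τ.1 = τ'.1 → τ = τ') →
    (∀ τ ∈ B, ∀ τ' ∈ B, τ.2 = τ'.2 → τ = τ') →
    (∀ τ ∈ B, ∀ α ∈ I, α.1 = τ.1 → τ.2 < α.2 → τ.1 < τ.2) →
    B.card ≤ (I.filter (fun α => lo ≤ α.1 ∧ α.2 < hi)).card := by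
  intro hi
  induction hi using Nat.strong_induction_on with
  | _ hi IH =>
    intro lo I B hI1 hI2 hB0 hBL hBR hBdL hBdR hdeg
    classical
    set W := I.filter (fun α => (∃ τ ∈ B, α.1 = τ.1) ∧ hi ≤ α.2) with hW
    by_cases hWe : W = ∅
    · -- no escaping arcs: map each token to the arc at its left endpoint
      set f : ℕ × ℕ → ℕ × ℕ := fun τ => if h : ∃ α ∈ I, α.1 = τ.1 then h.choose else τ with hf
      have hfspec : ∀ τ ∈ B, f τ ∈ I ∧ (f τ).1 = τ.1 := by
        intro τ hτ
        have h := hBL τ hτ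
        rw [hf]
        simp only [dif_pos h]
        exact ⟨h.choose_spec.1, h.choose_spec.2⟩
      apply Finset.card_le_card_of_injOn f
      · intro τ hτ
        obtain ⟨hfI, hf1⟩ := hfspec τ hτ
        simp only [Finset.mem_coe, Finset.mem_filter]
        refine ⟨hfI, ?_, ?_⟩
        · rw [hf1]; exact (hB0 τ hτ).1
        · by_contra hge
          push_neg at hge
          have : f τ ∈ W := by
            rw [hW]
            simp only [Finset.mem_filter]
            exact ⟨hfI, ⟨τ, hτ, hf1⟩, hge⟩
          rw [hWe] at this
          exact absurd this (Finset.notMem_empty _)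
      · intro τ hτ τ' hτ' he
        have h1 := (hfspec τ hτ).2
        have h2 := (hfspec τ' hτ').2
        exact hBdL τ hτ τ' hτ' (by rw [← h1, ← h2, he])
    · -- there is an escaping arc
      have hWne : W.Nonempty := Finset.nonempty_of_ne_empty hWe
      have hWim : (W.image Prod.fst).Nonempty := hWne.image _
      set s1 := (W.image Prod.fst).min' hWim with hs1
      obtain ⟨α1, hα1W, hα1s⟩ := Finset.mem_image.1 ((W.image Prod.fst).min'_mem hWim)
      have hα1 : α1 ∈ I ∧ (∃ τ ∈ B, α1.1 = τ.1) ∧ hi ≤ α1.2 := by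
        have := Finset.mem_filter.1 hα1W
        exact ⟨this.1, this.2.1, this.2.2⟩
      obtain ⟨τ1, hτ1B, hτ1⟩ := hα1.2.1
      have hτ1strict : τ1.1 < τ1.2 :=
        hdeg τ1 hτ1B α1 hα1.1 hτ1 (lt_of_lt_of_le (hB0 τ1 hτ1B).2.2 hα1.2.2)
      have hs1τ : s1 = τ1.1 := by rw [hs1, ← hα1s, hτ1]
      have hs1hi : s1 + 1 < hi := by
        have := (hB0 τ1 hτ1B).2.2
        omega
      have hs1lo : lo ≤ s1 := by
        rw [hs1τ]; exact (hB0 τ1 hτ1B).1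
      set B1 := B.filter (fun τ => τ.2 ≤ s1) with hB1
      set B2 := B.filter (fun τ => s1 < τ.2) with hB2
      -- map B2 tokens to arcs at their right endpoint
      set g : ℕ × ℕ → ℕ × ℕ := fun τ => if h : ∃ α ∈ I, α.2 = τ.2 then h.choose else τ with hg
      have hgspec : ∀ τ ∈ B, g τ ∈ I ∧ (g τ).2 = τ.2 := by
        intro τ hτ
        have h := hBR τ hτ
        rw [hg]
        simp only [dif_pos h]
        exact ⟨h.choose_spec.1, h.choose_spec.2⟩
      have hg1 : ∀ τ ∈ B2, s1 < (g τ).1 := by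
        intro τ hτ2
        have hτB : τ ∈ B := (Finset.mem_filter.1 hτ2).1
        have hτs : s1 < τ.2 := (Finset.mem_filter.1 hτ2).2
        obtain ⟨hgI, hg2⟩ := hgspec τ hτB
        by_contra hle
        push_neg at hle
        have hne : g τ ≠ α1 := by
          intro hc
          have : (g τ).2 = α1.2 := by rw [hc]
          rw [hg2] at this
          have := (hB0 τ hτB).2.2
          omega
        refine hI2 (g τ) hgI α1 hα1.1 hne ⟨?_, ?_, ?_⟩
        · omega
        · rw [hg2]; omega
        · rw [hg2]
          have := (hB0 τ hτB).2.2
          omega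
      -- S2 : image of B2
      set S2 := B2.image g with hS2
      have hS2card : S2.card = B2.card := by
        rw [hS2]
        apply Finset.card_image_of_injOn
        intro τ hτ τ' hτ' he
        have hτB : τ ∈ B := (Finset.mem_filter.1 hτ).1
        have hτ'B : τ' ∈ B := (Finset.mem_filter.1 hτ').1
        exact hBdR τ hτB τ' hτ'B (by rw [← (hgspec τ hτB).2, ← (hgspec τ' hτ'B).2, he])
      -- IH on B1
      have hIH : B1.card ≤ (I.filter (fun α => lo ≤ α.1 ∧ α.2 < s1 + 1)).card := by
        apply IH (s1 + 1) (by omega) lo I B1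
        · exact hI1
        · exact hI2
        · intro τ hτ
          have hτB : τ ∈ B := (Finset.mem_filter.1 hτ).1
          have hτs : τ.2 ≤ s1 := (Finset.mem_filter.1 hτ).2
          exact ⟨(hB0 τ hτB).1, (hB0 τ hτB).2.1, by omega⟩
        · exact fun τ hτ => hBL τ (Finset.mem_filter.1 hτ).1
        · exact fun τ hτ => hBR τ (Finset.mem_filter.1 hτ).1
        · exact fun τ hτ τ' hτ' => hBdL τ (Finset.mem_filter.1 hτ).1 τ' (Finset.mem_filter.1 hτ').1
        · exact fun τ hτ τ' hτ' => hBdR τ (Finset.mem_filter.1 hτ).1 τ' (Finset.mem_filter.1 hτ').1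
        · exact fun τ hτ => hdeg τ (Finset.mem_filter.1 hτ).1
      -- combine
      have hsplit : B1.card + B2.card = B.card := by
        rw [hB1, hB2]
        have := Finset.card_filter_add_card_filter_not (s := B)
          (p := fun τ => τ.2 ≤ s1)
        have hcongr : B.filter (fun τ => ¬ (fun τ : ℕ × ℕ => τ.2 ≤ s1) τ) = B.filter (fun τ => s1 < τ.2) := by
          apply Finset.filter_congr
          intro τ _
          constructor
          · intro h; omega
          · intro h; omega
        rw [hcongr] at this
        omega
      have hsub1 : (I.filter (fun α => lo ≤ α.1 ∧ α.2 < s1 + 1))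
          ⊆ I.filter (fun α => lo ≤ α.1 ∧ α.2 < hi) := by
        intro α hα
        simp only [Finset.mem_filter] at hα ⊢
        exact ⟨hα.1, hα.2.1, by omega⟩
      have hsub2 : S2 ⊆ I.filter (fun α => lo ≤ α.1 ∧ α.2 < hi) := by
        intro α hα
        rw [hS2] at hα
        obtain ⟨τ, hτ2, rfl⟩ := Finset.mem_image.1 hα
        have hτB : τ ∈ B := (Finset.mem_filter.1 hτ2).1
        obtain ⟨hgI, hg2⟩ := hgspec τ hτB
        simp only [Finset.mem_filter]
        refine ⟨hgI, ?_, ?_⟩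
        · have := hg1 τ hτ2
          omega
        · rw [hg2]
          exact (hB0 τ hτB).2.2
      have hdisj : Disjoint (I.filter (fun α => lo ≤ α.1 ∧ α.2 < s1 + 1)) S2 := by
        rw [Finset.disjoint_left]
        intro α hα hα2
        simp only [Finset.mem_filter] at hα
        rw [hS2] at hα2
        obtain ⟨τ, hτ2, he⟩ := Finset.mem_image.1 hα2
        have := hg1 τ hτ2
        rw [he] at this
        have hle := hI1 α hα.1
        omega
      have hunion := Finset.card_union_of_disjoint hdisj
      have hsubU : (I.filter (fun α => lo ≤ α.1 ∧ α.2 < s1 + 1)) ∪ S2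
          ⊆ I.filter (fun α => lo ≤ α.1 ∧ α.2 < hi) :=
        Finset.union_subset hsub1 hsub2
      have := Finset.card_le_card hsubU
      omega

end S11

namespace S11
open Finset NCP
variable {n : ℕ} (lam : NCP n)

/-- cardinality of prefix filters -/
lemma card_val_lt' {t : ℕ} (h : t ≤ n) :
    (univ.filter (fun a : Fin n => (a : ℕ) < t)).card = t := by
  induction t with
  | zero => simp
  | succ t IH =>
    have ht : t < n := by omega
    have : (univ.filter (fun a : Fin n => (a : ℕ) < t + 1))
        = insert (⟨t, ht⟩ : Fin n) (univ.filter (fun a : Fin n => (a : ℕ) < t)) := by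
      ext a
      simp only [Finset.mem_filter, mem_univ, true_and, Finset.mem_insert, Fin.ext_iff]
      omega
    rw [this, Finset.card_insert_of_notMem (by
      simp only [Finset.mem_filter, mem_univ, true_and]
      omega), IH (by omega)]

/-- generic pointwise filter split -/
lemma filter_split_card (p q c : Fin n → Prop)
    [DecidablePred p] [DecidablePred q] [DecidablePred c]
    (h : ∀ a, (c a ↔ (p a ∨ q a)) ∧ ¬(p a ∧ q a)) :
    (univ.filter p).card + (univ.filter q).card = (univ.filter c).card := by
  classical
  rw [Finset.card_filter, Finset.card_filter, Finset.card_filter, ← Finset.sum_add_distrib]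
  refine Finset.sum_congr rfl (fun a _ => ?_)
  have h1 := (h a).1
  have h2 := (h a).2
  by_cases hp : p a <;> by_cases hq : q a <;> by_cases hc : c a <;> simp [hp, hq, hc] <;> tauto

lemma dd_class_split (u : Equiv.Perm (Fin n)) (m x : ℕ) :
    dd u m x = (univ.filter (fun a : Fin n =>
        a ∈ rpos lam ∧ (a:ℕ) < m ∧ (u a : ℕ) < x)).card
      + (univ.filter (fun a : Fin n =>
        a ∉ rpos lam ∧ (a:ℕ) < m ∧ (u a : ℕ) < x)).card := by
  rw [dd]
  exact (filter_split_card
    (fun a : Fin n => a ∈ rpos lam ∧ (a:ℕ) < m ∧ (u a : ℕ) < x)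
    (fun a : Fin n => a ∉ rpos lam ∧ (a:ℕ) < m ∧ (u a : ℕ) < x)
    (fun a : Fin n => (a:ℕ) < m ∧ (u a : ℕ) < x)
    (fun a => ⟨by tauto, by tauto⟩)).symm


/-- order-isomorphism maximizes prefix counts (used for the `T` side) -/
lemma ORD (P : Fin n → Prop) (PV : Fin n → Prop) [DecidablePred P] (Tp w : Equiv.Perm (Fin n))
    (hmem : ∀ j, P j ↔ PV (Tp j))
    (hmono : ∀ j j', P j → P j' → j < j' → Tp j < Tp j')
    (hw : ∀ j, P j → PV (w j)) (m x : ℕ) :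
    (univ.filter (fun a : Fin n => P a ∧ (a:ℕ) < m ∧ (w a : ℕ) < x)).card
      ≤ (univ.filter (fun a : Fin n => P a ∧ (a:ℕ) < m ∧ (Tp a : ℕ) < x)).card := by
  classical
  by_cases hb : ∃ b : Fin n, P b ∧ (b:ℕ) < m ∧ x ≤ (Tp b : ℕ)
  · -- bound via values
    obtain ⟨b0, hb0P, hb0m, hb0x⟩ := hb
    have h1 : (univ.filter (fun a : Fin n => P a ∧ (a:ℕ) < m ∧ (w a : ℕ) < x)).card
        ≤ (univ.filter (fun v : Fin n => PV v ∧ (v:ℕ) < x)).card := by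
      apply Finset.card_le_card_of_injOn w
      · intro a ha
        simp only [Finset.mem_coe, Finset.mem_filter, mem_univ, true_and] at ha ⊢
        exact ⟨hw a ha.1, ha.2.2⟩
      · intro a _ a' _ he
        exact w.injective he
    refine le_trans h1 ?_
    apply Finset.card_le_card_of_injOn (fun v => Tp⁻¹ v)
    · intro v hv
      simp only [Finset.mem_coe, Finset.mem_filter, mem_univ, true_and] at hv ⊢
      have hTv : Tp (Tp⁻¹ v) = v := by simp
      have hP : P (Tp⁻¹ v) := (hmem _).2 (by rw [hTv]; exact hv.1)
      refine ⟨hP, ?_, by rw [hTv]; exact hv.2⟩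
      by_contra hge
      push_neg at hge
      have hne : Tp⁻¹ v ≠ b0 := by
        intro hc
        rw [hc] at hTv
        omega
      have : b0 < Tp⁻¹ v := by
        have : (b0 : ℕ) < ((Tp⁻¹ v : Fin n) : ℕ) := by omega
        exact this
      have := hmono b0 (Tp⁻¹ v) hb0P hP this
      rw [hTv] at this
      have : (Tp b0 : ℕ) < (v : ℕ) := this
      omega
    · intro a _ a' _ he
      exact Tp⁻¹.injective he
  · -- all of P ∩ [0,m) maps below x under Tp
    push_neg at hb
    have : (univ.filter (fun a : Fin n => P a ∧ (a:ℕ) < m ∧ (Tp a : ℕ) < x))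
        = (univ.filter (fun a : Fin n => P a ∧ (a:ℕ) < m)) := by
      ext a
      simp only [Finset.mem_filter, mem_univ, true_and]
      constructor
      · rintro ⟨h1, h2, _⟩; exact ⟨h1, h2⟩
      · rintro ⟨h1, h2⟩
        exact ⟨h1, h2, hb a h1 h2⟩
    rw [this]
    apply Finset.card_le_card
    intro a ha
    simp only [Finset.mem_filter, mem_univ, true_and] at ha ⊢
    exact ⟨ha.1, ha.2.1⟩

section Tfacts
variable {T : Equiv.Perm (Fin n)} (hT : IsT lam T)

lemma cardRL_le (t : ℕ) :
    (univ.filter (fun b : Fin n => b ∈ rpos lam ∧ (b:ℕ) ≤ t)).card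
      ≤ (univ.filter (fun i : Fin n => i ∈ lpos lam ∧ (i:ℕ) < t)).card := by
  apply Finset.card_le_card_of_injOn (fun b => pfun lam b)
  · intro b hb
    simp only [Finset.mem_coe, Finset.mem_filter, mem_univ, true_and] at hb ⊢
    have harc := pfun_mem lam hb.1
    have hlt := pfun_lt lam hb.1
    exact ⟨(mem_lpos lam).2 ⟨b, harc⟩, by omega⟩
  · intro b hb b' hb' he
    simp only [coe_filter, Set.mem_setOf_eq] at hb hb'
    have h1 := pfun_mem lam hb.2.1
    have h2 := pfun_mem lam hb'.2.1
    have he' : pfun lam b = pfun lam b' := he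
    rw [he'] at h1
    exact arc_left_unique lam h1 h2

include hT in
lemma T_lt : ∀ b ∈ rpos lam, (T b : ℕ) < (b : ℕ) := by
  intro b hb
  by_contra hge
  push_neg at hge
  have hU : (univ.filter (fun i : Fin n => i ∈ lpos lam ∧ (i:ℕ) < (b:ℕ))).card
      ≤ (univ.filter (fun b' : Fin n => b' ∈ rpos lam ∧ (b':ℕ) < (b:ℕ))).card := by
    apply Finset.card_le_card_of_injOn (fun v => T⁻¹ v)
    · intro v hv
      simp only [Finset.mem_coe, Finset.mem_filter, mem_univ, true_and] at hv ⊢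
      have hTv : T (T⁻¹ v) = v := by simp
      have hR : T⁻¹ v ∈ rpos lam := (hT.1 _).2 (by rw [hTv]; exact hv.1)
      refine ⟨hR, ?_⟩
      by_contra hge2
      push_neg at hge2
      have hne : T⁻¹ v ≠ b := by
        intro hc
        rw [hc] at hTv
        omega
      have hlt : b < T⁻¹ v := by
        have hvv := val_ne_of_ne hne
        have : (b:ℕ) < ((T⁻¹ v : Fin n):ℕ) := by omega
        exact this
      have hmono := hT.2.1 b (T⁻¹ v) hb hR hlt
      rw [hTv] at hmono
      have : (T b : ℕ) < (v : ℕ) := hmono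
      omega
    · intro a _ a' _ he
      exact T⁻¹.injective he
  have hins : (univ.filter (fun b' : Fin n => b' ∈ rpos lam ∧ (b':ℕ) ≤ (b:ℕ)))
      = insert b (univ.filter (fun b' : Fin n => b' ∈ rpos lam ∧ (b':ℕ) < (b:ℕ))) := by
    ext a
    simp only [Finset.mem_filter, mem_univ, true_and, Finset.mem_insert]
    constructor
    · rintro ⟨h1, h2⟩
      by_cases hab : a = b
      · exact Or.inl hab
      · exact Or.inr ⟨h1, lt_of_le_of_ne h2 (val_ne_of_ne hab)⟩
    · rintro (rfl | ⟨h1, h2⟩)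
      · exact ⟨hb, le_refl _⟩
      · exact ⟨h1, by omega⟩
  have hcard := cardRL_le lam ((b:ℕ))
  rw [hins, Finset.card_insert_of_notMem (by
    simp only [Finset.mem_filter, mem_univ, true_and]
    rintro ⟨_, hc⟩
    omega)] at hcard
  omega

include hT in
lemma T_ge : ∀ a : Fin n, a ∉ rpos lam → (a : ℕ) ≤ (T a : ℕ) := by
  intro a ha
  by_contra hlt
  push_neg at hlt
  -- V = non-right ≤ a maps into non-left < a
  have hV : (univ.filter (fun j : Fin n => j ∉ rpos lam ∧ (j:ℕ) ≤ (a:ℕ))).card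
      ≤ (univ.filter (fun v : Fin n => v ∉ lpos lam ∧ (v:ℕ) < (a:ℕ))).card := by
    apply Finset.card_le_card_of_injOn T
    · intro j hj
      simp only [Finset.mem_coe, Finset.mem_filter, mem_univ, true_and] at hj ⊢
      have hnl : T j ∉ lpos lam := fun hc => hj.1 ((hT.1 j).2 hc)
      refine ⟨hnl, ?_⟩
      by_cases hja : j = a
      · subst hja; omega
      · have hjlt : j < a := by
          have := val_ne_of_ne hja
          have : (j:ℕ) < (a:ℕ) := by omega
          exact this
        have := hT.2.2 j a hj.1 ha hjlt
        have h2 : (T j : ℕ) < (T a : ℕ) := this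
        omega
    · intro x _ y _ he
      exact T.injective he
  -- counting
  have hs1 := filter_split_card
    (fun j : Fin n => j ∈ rpos lam ∧ (j:ℕ) ≤ (a:ℕ))
    (fun j : Fin n => j ∉ rpos lam ∧ (j:ℕ) ≤ (a:ℕ))
    (fun j : Fin n => (j:ℕ) ≤ (a:ℕ)) (fun j => ⟨by tauto, by tauto⟩)
  have hs2 := filter_split_card
    (fun v : Fin n => v ∈ lpos lam ∧ (v:ℕ) < (a:ℕ))
    (fun v : Fin n => v ∉ lpos lam ∧ (v:ℕ) < (a:ℕ))
    (fun v : Fin n => (v:ℕ) < (a:ℕ)) (fun v => ⟨by tauto, by tauto⟩)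
  have hc1 : (univ.filter (fun j : Fin n => (j:ℕ) ≤ (a:ℕ))).card = (a:ℕ) + 1 := by
    have : (univ.filter (fun j : Fin n => (j:ℕ) ≤ (a:ℕ)))
        = (univ.filter (fun j : Fin n => (j:ℕ) < (a:ℕ) + 1)) := by
      apply Finset.filter_congr
      intro j _
      constructor
      · intro h; omega
      · intro h; omega
    rw [this]
    exact card_val_lt' (by have := a.isLt; omega)
  have hc2 : (univ.filter (fun v : Fin n => (v:ℕ) < (a:ℕ))).card = (a:ℕ) :=
    card_val_lt' (by have := a.isLt; omega)
  have hRL := cardRL_le lam ((a:ℕ))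
  omega

include hT in
lemma T_mem_lpos : ∀ b ∈ rpos lam, T b ∈ lpos lam := fun b hb => (hT.1 b).1 hb

include hT in
lemma T_not_lpos : ∀ a : Fin n, a ∉ rpos lam → T a ∉ lpos lam :=
  fun a ha hc => ha ((hT.1 a).2 hc)

include hT in
lemma Tinv_le {v : Fin n} (hv : v ∉ lpos lam) : ((T⁻¹ v : Fin n) : ℕ) ≤ (v : ℕ) := by
  have hTv : T (T⁻¹ v) = v := by simp
  have hnr : T⁻¹ v ∉ rpos lam := by
    intro hc
    exact hv (by rw [← hTv]; exact (hT.1 _).1 hc)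
  have := T_ge lam hT (T⁻¹ v) hnr
  rw [hTv] at this
  exact this

end Tfacts

section Qfacts
variable {Q : Equiv.Perm (Fin n)} (hQ : IsQ lam Q)

include hQ in
lemma Q_eq_pfun : ∀ b ∈ rpos lam, Q b = pfun lam b := by
  intro b hb
  rw [hQ b, Qfun, dif_pos ((mem_rpos lam).1 hb)]
  exact arc_right_unique lam ((mem_rpos lam).1 hb).choose_spec (pfun_mem lam hb)

include hQ in
lemma Q_eq_Mfun : ∀ a : Fin n, a ∉ rpos lam → Q a = Mfun lam a := by
  intro a ha
  rw [hQ a, Qfun, dif_neg (fun hc => ha ((mem_rpos lam).2 hc))]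
  exact compMax_eq_Mfun lam a

include hQ in
lemma Q_lt : ∀ b ∈ rpos lam, (Q b : ℕ) < (b : ℕ) := by
  intro b hb
  rw [Q_eq_pfun lam hQ b hb]
  exact pfun_lt lam hb

include hQ in
lemma Q_ge : ∀ a : Fin n, a ∉ rpos lam → (a : ℕ) ≤ (Q a : ℕ) := by
  intro a ha
  rw [Q_eq_Mfun lam hQ a ha]
  exact Mfun_ge lam a

include hQ in
lemma Qinv_gt {v : Fin n} (hv : v ∈ lpos lam) : (v : ℕ) < ((Q⁻¹ v : Fin n) : ℕ) := by
  have harc := rfun_mem lam hv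
  have hbr : rfun lam v ∈ rpos lam := (mem_rpos lam).2 ⟨v, harc⟩
  have hQb : Q (rfun lam v) = v := by
    rw [Q_eq_pfun lam hQ _ hbr]
    exact pfun_eq lam harc
  have hinv : Q⁻¹ v = rfun lam v := by
    have h2 := congrArg (fun z => Q⁻¹ z) hQb
    simpa using h2.symm
  rw [hinv]
  exact rfun_gt lam hv

end Qfacts
end S11

namespace S11
open Finset NCP
variable {n : ℕ} (lam : NCP n)

lemma card_lpos_eq_card_rpos : (lpos lam).card = (rpos lam).card := by
  unfold lpos rpos
  rw [Finset.card_image_of_injOn, Finset.card_image_of_injOn]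
  · intro p hp q hq he
    obtain ⟨p1, p2⟩ := p
    obtain ⟨q1, q2⟩ := q
    have he' : p2 = q2 := he
    subst he'
    have := arc_right_unique lam hp hq
    rw [this]
  · intro p hp q hq he
    obtain ⟨p1, p2⟩ := p
    obtain ⟨q1, q2⟩ := q
    have he' : p1 = q1 := he
    subst he'
    have := arc_left_unique lam hp hq
    rw [this]

lemma filter_mem_eq (S : Finset (Fin n)) : univ.filter (fun a => a ∈ S) = S := by
  ext a
  simp

lemma card_not_mem_rpos_eq :
    (univ.filter (fun a : Fin n => a ∉ rpos lam)).card
      = (univ.filter (fun v : Fin n => v ∉ lpos lam)).card := by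
  have h1 := filter_split_card (fun a : Fin n => a ∈ rpos lam) (fun a : Fin n => a ∉ rpos lam)
    (fun _ : Fin n => True) (fun a => ⟨by tauto, by tauto⟩)
  have h2 := filter_split_card (fun a : Fin n => a ∈ lpos lam) (fun a : Fin n => a ∉ lpos lam)
    (fun _ : Fin n => True) (fun a => ⟨by tauto, by tauto⟩)
  rw [filter_mem_eq] at h1 h2
  have h3 := card_lpos_eq_card_rpos lam
  omega

/-- a map sending non-right-endpoints injectively into non-left-endpoints is onto them -/
lemma mins_to_maxs_surj (φ : Fin n → Fin n)
    (hmaps : ∀ a, a ∉ rpos lam → φ a ∉ lpos lam)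
    (hinj : ∀ a a', a ∉ rpos lam → a' ∉ rpos lam → φ a = φ a' → a = a') :
    ∀ v, v ∉ lpos lam → ∃ a, a ∉ rpos lam ∧ φ a = v := by
  intro v hv
  have hsub : (univ.filter (fun a : Fin n => a ∉ rpos lam)).image φ
      ⊆ univ.filter (fun v : Fin n => v ∉ lpos lam) := by
    intro x hx
    obtain ⟨a, ha, rfl⟩ := Finset.mem_image.1 hx
    simp only [Finset.mem_filter, mem_univ, true_and] at ha ⊢
    exact hmaps a ha
  have hcard : ((univ.filter (fun a : Fin n => a ∉ rpos lam)).image φ).card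
      = (univ.filter (fun v : Fin n => v ∉ lpos lam)).card := by
    rw [Finset.card_image_of_injOn (fun a ha a' ha' he =>
      hinj a a' (Finset.mem_filter.1 ha).2 (Finset.mem_filter.1 ha').2 he)]
    exact card_not_mem_rpos_eq lam
  have heq := Finset.eq_of_subset_of_card_le hsub (le_of_eq hcard.symm)
  have hvmem : v ∈ (univ.filter (fun a : Fin n => a ∉ rpos lam)).image φ := by
    rw [heq]
    simp only [Finset.mem_filter, mem_univ, true_and]
    exact hv
  obtain ⟨a, ha, he⟩ := Finset.mem_image.1 hvmem
  exact ⟨a, (Finset.mem_filter.1 ha).2, he⟩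

lemma Mfun_Pfun_of_not_lpos {v : Fin n} (hv : v ∉ lpos lam) : Mfun lam (Pfun lam v) = v := by
  rw [← Mfun_eq_of_connected lam (Pfun_connected lam v)]
  exact Mfun_of_not_lpos lam hv

lemma Pfun_Mfun_of_not_rpos {a : Fin n} (ha : a ∉ rpos lam) : Pfun lam (Mfun lam a) = a := by
  rw [← Pfun_eq_of_connected lam (Mfun_connected lam a)]
  exact Pfun_of_not_rpos lam ha

/-- the ℕ-arc system of the arcs -/
noncomputable def Iarcs : Finset (ℕ × ℕ) :=
  lam.1.image (fun p => ((p.1 : ℕ), (p.2 : ℕ)))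

lemma Iarcs_I1 : ∀ p ∈ Iarcs lam, p.1 ≤ p.2 := by
  intro p hp
  obtain ⟨q, hq, rfl⟩ := Finset.mem_image.1 hp
  exact le_of_lt (arc_lt lam hq)

lemma Iarcs_I2 : ∀ p ∈ Iarcs lam, ∀ q ∈ Iarcs lam, p ≠ q →
    ¬(p.1 ≤ q.1 ∧ q.1 < p.2 ∧ p.2 ≤ q.2) := by
  intro p hp q hq hne hpat
  obtain ⟨p', hp', rfl⟩ := Finset.mem_image.1 hp
  obtain ⟨q', hq', rfl⟩ := Finset.mem_image.1 hq
  have hne' : p' ≠ q' := fun hc => hne (by rw [hc])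
  refine lam.2.2 p' hp' q' hq' hne' ⟨?_, ?_, ?_⟩
  · exact hpat.1
  · exact hpat.2.1
  · exact hpat.2.2

/-- the ℕ-interval system of the components -/
noncomputable def Icomp : Finset (ℕ × ℕ) :=
  (univ.filter (fun a : Fin n => a ∉ rpos lam)).image
    (fun a : Fin n => ((a : ℕ), (Mfun lam a : ℕ)))

lemma Icomp_mem {a : Fin n} (ha : a ∉ rpos lam) :
    ((a : ℕ), (Mfun lam a : ℕ)) ∈ Icomp lam := by
  refine Finset.mem_image.2 ⟨a, ?_, rfl⟩
  simp only [Finset.mem_filter, mem_univ, true_and]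
  exact ha

lemma Icomp_I1 : ∀ p ∈ Icomp lam, p.1 ≤ p.2 := by
  intro p hp
  obtain ⟨a, _, rfl⟩ := Finset.mem_image.1 hp
  exact Mfun_ge lam a

lemma Icomp_I2 : ∀ p ∈ Icomp lam, ∀ q ∈ Icomp lam, p ≠ q →
    ¬(p.1 ≤ q.1 ∧ q.1 < p.2 ∧ p.2 ≤ q.2) := by
  intro p hp q hq hne hpat
  obtain ⟨a, ha, rfl⟩ := Finset.mem_image.1 hp
  obtain ⟨a', ha', rfl⟩ := Finset.mem_image.1 hq
  simp only [Finset.mem_filter, mem_univ, true_and] at ha ha'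
  have hanene : a ≠ a' := by
    intro hc
    subst hc
    exact hne rfl
  exact comps_noncross lam ha ha' hanene ⟨hpat.1, le_of_lt hpat.2.1, hpat.2.2⟩

/-- K lower bound, right-endpoint class -/
lemma K_lower_R (w : Equiv.Perm (Fin n))
    (hwlt : ∀ b ∈ rpos lam, (w b : ℕ) < (b : ℕ))
    (hwL : ∀ b ∈ rpos lam, w b ∈ lpos lam) (m x : ℕ) :
    (univ.filter (fun b : Fin n => b ∈ rpos lam ∧ (b:ℕ) < m ∧ (pfun lam b : ℕ) < x)).card
      ≤ (univ.filter (fun b : Fin n => b ∈ rpos lam ∧ (b:ℕ) < m ∧ (w b : ℕ) < x)).card := by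
  -- complement split
  have hsplit1 := filter_split_card
    (fun b : Fin n => b ∈ rpos lam ∧ (b:ℕ) < m ∧ (w b : ℕ) < x)
    (fun b : Fin n => b ∈ rpos lam ∧ (b:ℕ) < m ∧ x ≤ (w b : ℕ))
    (fun b : Fin n => b ∈ rpos lam ∧ (b:ℕ) < m)
    (fun b => ⟨by constructor
                  · intro hc
                    rcases lt_or_ge ((w b : ℕ)) x with h | h
                    · exact Or.inl ⟨hc.1, hc.2, h⟩
                    · exact Or.inr ⟨hc.1, hc.2, h⟩
                  · rintro (h | h) <;> exact ⟨h.1, h.2.1⟩,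
               by rintro ⟨h1, h2⟩; omega⟩)
  have hsplit2 := filter_split_card
    (fun b : Fin n => b ∈ rpos lam ∧ (b:ℕ) < m ∧ (pfun lam b : ℕ) < x)
    (fun b : Fin n => b ∈ rpos lam ∧ (b:ℕ) < m ∧ x ≤ (pfun lam b : ℕ))
    (fun b : Fin n => b ∈ rpos lam ∧ (b:ℕ) < m)
    (fun b => ⟨by constructor
                  · intro hc
                    rcases lt_or_ge ((pfun lam b : ℕ)) x with h | h
                    · exact Or.inl ⟨hc.1, hc.2, h⟩
                    · exact Or.inr ⟨hc.1, hc.2, h⟩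
                  · rintro (h | h) <;> exact ⟨h.1, h.2.1⟩,
               by rintro ⟨h1, h2⟩; omega⟩)
  -- the pfun complement count equals the window arc count
  have htgt : (univ.filter (fun b : Fin n =>
        b ∈ rpos lam ∧ (b:ℕ) < m ∧ x ≤ (pfun lam b : ℕ))).card
      = ((Iarcs lam).filter (fun α => x ≤ α.1 ∧ α.2 < m)).card := by
    apply Finset.card_bij (fun b _ => ((pfun lam b : ℕ), (b : ℕ)))
    · intro b hb
      simp only [Finset.mem_filter, mem_univ, true_and] at hb
      simp only [Finset.mem_filter]
      refine ⟨?_, hb.2.2, hb.2.1⟩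
      exact Finset.mem_image_of_mem _ (pfun_mem lam hb.1)
    · intro b hb b' hb' he
      have : (b : ℕ) = (b' : ℕ) := congrArg Prod.snd he
      exact Fin.val_injective this
    · intro α hα
      simp only [Finset.mem_filter] at hα
      obtain ⟨hα1, hx, hm⟩ := hα
      obtain ⟨p', hp', rfl⟩ := Finset.mem_image.1 hα1
      refine ⟨p'.2, ?_, ?_⟩
      · simp only [Finset.mem_filter, mem_univ, true_and]
        have hmem : p'.2 ∈ rpos lam := (mem_rpos lam).2 ⟨p'.1, by rwa [Prod.mk.eta]⟩
        have hpf : pfun lam p'.2 = p'.1 := pfun_eq lam (by rwa [Prod.mk.eta])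
        exact ⟨hmem, hm, by rw [hpf]; exact hx⟩
      · have hpf : pfun lam p'.2 = p'.1 := pfun_eq lam (by rwa [Prod.mk.eta])
        rw [hpf]
  -- bound the w complement count using AL
  have hB : (univ.filter (fun b : Fin n =>
        b ∈ rpos lam ∧ (b:ℕ) < m ∧ x ≤ (w b : ℕ))).card
      ≤ ((Iarcs lam).filter (fun α => x ≤ α.1 ∧ α.2 < m)).card := by
    set B := (univ.filter (fun b : Fin n =>
        b ∈ rpos lam ∧ (b:ℕ) < m ∧ x ≤ (w b : ℕ))).image
      (fun b => ((w b : ℕ), (b : ℕ))) with hBdef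
    have hcardB : B.card = (univ.filter (fun b : Fin n =>
        b ∈ rpos lam ∧ (b:ℕ) < m ∧ x ≤ (w b : ℕ))).card := by
      rw [hBdef]
      apply Finset.card_image_of_injOn
      intro b _ b' _ he
      exact Fin.val_injective (congrArg Prod.snd he)
    have hmemB : ∀ τ ∈ B, ∃ b : Fin n, b ∈ rpos lam ∧ (b:ℕ) < m ∧ x ≤ (w b : ℕ)
        ∧ τ = ((w b : ℕ), (b : ℕ)) := by
      intro τ hτ
      rw [hBdef] at hτ
      obtain ⟨b, hb, rfl⟩ := Finset.mem_image.1 hτ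
      simp only [Finset.mem_filter, mem_univ, true_and] at hb
      exact ⟨b, hb.1, hb.2.1, hb.2.2, rfl⟩
    rw [← hcardB]
    apply AL m x (Iarcs lam) B (Iarcs_I1 lam) (Iarcs_I2 lam)
    · intro τ hτ
      obtain ⟨b, h1, h2, h3, rfl⟩ := hmemB τ hτ
      exact ⟨h3, le_of_lt (hwlt b h1), h2⟩
    · intro τ hτ
      obtain ⟨b, h1, h2, h3, rfl⟩ := hmemB τ hτ
      have hL := hwL b h1
      refine ⟨((w b : ℕ), (rfun lam (w b) : ℕ)), ?_, rfl⟩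
      exact Finset.mem_image_of_mem _ (rfun_mem lam hL)
    · intro τ hτ
      obtain ⟨b, h1, h2, h3, rfl⟩ := hmemB τ hτ
      refine ⟨((pfun lam b : ℕ), (b : ℕ)), ?_, rfl⟩
      exact Finset.mem_image_of_mem _ (pfun_mem lam h1)
    · intro τ hτ τ' hτ' he
      obtain ⟨b, h1, h2, h3, rfl⟩ := hmemB τ hτ
      obtain ⟨b', h1', h2', h3', rfl⟩ := hmemB τ' hτ'
      have : w b = w b' := Fin.val_injective he
      have : b = b' := w.injective this
      rw [this]
    · intro τ hτ τ' hτ' he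
      obtain ⟨b, h1, h2, h3, rfl⟩ := hmemB τ hτ
      obtain ⟨b', h1', h2', h3', rfl⟩ := hmemB τ' hτ'
      have : b = b' := Fin.val_injective he
      rw [this]
    · intro τ hτ α _ _ _
      obtain ⟨b, h1, h2, h3, rfl⟩ := hmemB τ hτ
      exact hwlt b h1
  omega

end S11

namespace S11
open Finset NCP
variable {n : ℕ} (lam : NCP n)

/-- count of class-C positions with value `< x` is class-independent -/
lemma class_C_value_count (φ : Fin n → Fin n)
    (hmaps : ∀ a, a ∉ rpos lam → φ a ∉ lpos lam)
    (hinj : ∀ a a', a ∉ rpos lam → a' ∉ rpos lam → φ a = φ a' → a = a') (x : ℕ) :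
    (univ.filter (fun a : Fin n => a ∉ rpos lam ∧ (φ a : ℕ) < x)).card
      = (univ.filter (fun v : Fin n => v ∉ lpos lam ∧ (v:ℕ) < x)).card := by
  apply Finset.card_bij (fun a _ => φ a)
  · intro a ha
    simp only [Finset.mem_filter, mem_univ, true_and] at ha ⊢
    exact ⟨hmaps a ha.1, ha.2⟩
  · intro a ha a' ha' he
    simp only [Finset.mem_filter, mem_univ, true_and] at ha ha'
    exact hinj a a' ha.1 ha'.1 he
  · intro v hv
    simp only [Finset.mem_filter, mem_univ, true_and] at hv
    obtain ⟨a, ha, rfl⟩ := mins_to_maxs_surj lam φ hmaps hinj v hv.1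
    exact ⟨a, by simp only [Finset.mem_filter, mem_univ, true_and]; exact ⟨ha, hv.2⟩, rfl⟩

/-- K lower bound, complement class -/
lemma K_lower_C (w : Equiv.Perm (Fin n))
    (hge : ∀ a : Fin n, a ∉ rpos lam → (a:ℕ) ≤ (w a : ℕ))
    (hnl : ∀ a : Fin n, a ∉ rpos lam → w a ∉ lpos lam) (m x : ℕ) :
    (univ.filter (fun a : Fin n => a ∉ rpos lam ∧ (a:ℕ) < m ∧ (Mfun lam a : ℕ) < x)).card
      ≤ (univ.filter (fun a : Fin n => a ∉ rpos lam ∧ (a:ℕ) < m ∧ (w a : ℕ) < x)).card := by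
  have hMmaps : ∀ a : Fin n, a ∉ rpos lam → Mfun lam a ∉ lpos lam :=
    fun a _ => Mfun_not_lpos lam a
  have hMinj : ∀ a a' : Fin n, a ∉ rpos lam → a' ∉ rpos lam → Mfun lam a = Mfun lam a' → a = a' := by
    intro a a' ha ha' he
    have h1 := Pfun_Mfun_of_not_rpos lam ha
    have h2 := Pfun_Mfun_of_not_rpos lam ha'
    rw [← h1, ← h2, he]
  have hwinj : ∀ a a' : Fin n, a ∉ rpos lam → a' ∉ rpos lam → w a = w a' → a = a' :=
    fun a a' _ _ he => w.injective he
  -- splits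
  have hsplitw := filter_split_card
    (fun a : Fin n => a ∉ rpos lam ∧ (a:ℕ) < m ∧ (w a : ℕ) < x)
    (fun a : Fin n => a ∉ rpos lam ∧ m ≤ (a:ℕ) ∧ (w a : ℕ) < x)
    (fun a : Fin n => a ∉ rpos lam ∧ (w a : ℕ) < x)
    (fun a => ⟨by constructor
                  · intro hc
                    rcases lt_or_ge ((a:ℕ)) m with h | h
                    · exact Or.inl ⟨hc.1, h, hc.2⟩
                    · exact Or.inr ⟨hc.1, h, hc.2⟩
                  · rintro (h | h) <;> exact ⟨h.1, h.2.2⟩,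
               by rintro ⟨h1, h2⟩; omega⟩)
  have hsplitM := filter_split_card
    (fun a : Fin n => a ∉ rpos lam ∧ (a:ℕ) < m ∧ (Mfun lam a : ℕ) < x)
    (fun a : Fin n => a ∉ rpos lam ∧ m ≤ (a:ℕ) ∧ (Mfun lam a : ℕ) < x)
    (fun a : Fin n => a ∉ rpos lam ∧ (Mfun lam a : ℕ) < x)
    (fun a => ⟨by constructor
                  · intro hc
                    rcases lt_or_ge ((a:ℕ)) m with h | h
                    · exact Or.inl ⟨hc.1, h, hc.2⟩
                    · exact Or.inr ⟨hc.1, h, hc.2⟩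
                  · rintro (h | h) <;> exact ⟨h.1, h.2.2⟩,
               by rintro ⟨h1, h2⟩; omega⟩)
  have htotw := class_C_value_count lam w (fun a ha => hnl a ha) hwinj x
  have htotM := class_C_value_count lam (Mfun lam) hMmaps hMinj x
  -- upper window: target count equality for Mfun
  have htgt : (univ.filter (fun a : Fin n =>
        a ∉ rpos lam ∧ m ≤ (a:ℕ) ∧ (Mfun lam a : ℕ) < x)).card
      = ((Icomp lam).filter (fun α => m ≤ α.1 ∧ α.2 < x)).card := by
    apply Finset.card_bij (fun (a : Fin n) (_ : a ∈ _) => ((a : ℕ), (Mfun lam a : ℕ)))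
    · intro a ha
      simp only [Finset.mem_filter, mem_univ, true_and] at ha
      simp only [Finset.mem_filter]
      exact ⟨Icomp_mem lam ha.1, ha.2.1, ha.2.2⟩
    · intro a _ a' _ he
      exact Fin.val_injective (congrArg Prod.fst he)
    · intro α hα
      simp only [Finset.mem_filter] at hα
      obtain ⟨hα1, hm, hx⟩ := hα
      obtain ⟨a, ha, rfl⟩ := Finset.mem_image.1 hα1
      simp only [Finset.mem_filter, mem_univ, true_and] at ha
      exact ⟨a, by simp only [Finset.mem_filter, mem_univ, true_and]; exact ⟨ha, hm, hx⟩, rfl⟩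
  -- AL bound for w upper window
  have hB : (univ.filter (fun a : Fin n =>
        a ∉ rpos lam ∧ m ≤ (a:ℕ) ∧ (w a : ℕ) < x)).card
      ≤ ((Icomp lam).filter (fun α => m ≤ α.1 ∧ α.2 < x)).card := by
    set B := (univ.filter (fun a : Fin n =>
        a ∉ rpos lam ∧ m ≤ (a:ℕ) ∧ (w a : ℕ) < x)).image
      (fun a : Fin n => ((a : ℕ), (w a : ℕ))) with hBdef
    have hcardB : B.card = (univ.filter (fun a : Fin n =>
        a ∉ rpos lam ∧ m ≤ (a:ℕ) ∧ (w a : ℕ) < x)).card := by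
      rw [hBdef]
      apply Finset.card_image_of_injOn
      intro a _ a' _ he
      exact Fin.val_injective (congrArg Prod.fst he)
    have hmemB : ∀ τ ∈ B, ∃ a : Fin n, a ∉ rpos lam ∧ m ≤ (a:ℕ) ∧ (w a : ℕ) < x
        ∧ τ = ((a : ℕ), (w a : ℕ)) := by
      intro τ hτ
      rw [hBdef] at hτ
      obtain ⟨a, ha, rfl⟩ := Finset.mem_image.1 hτ
      simp only [Finset.mem_filter, mem_univ, true_and] at ha
      exact ⟨a, ha.1, ha.2.1, ha.2.2, rfl⟩
    rw [← hcardB]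
    apply AL x m (Icomp lam) B (Icomp_I1 lam) (Icomp_I2 lam)
    · intro τ hτ
      obtain ⟨a, h1, h2, h3, rfl⟩ := hmemB τ hτ
      exact ⟨h2, hge a h1, h3⟩
    · intro τ hτ
      obtain ⟨a, h1, h2, h3, rfl⟩ := hmemB τ hτ
      exact ⟨((a : ℕ), (Mfun lam a : ℕ)), Icomp_mem lam h1, rfl⟩
    · intro τ hτ
      obtain ⟨a, h1, h2, h3, rfl⟩ := hmemB τ hτ
      have hwa : w a ∉ lpos lam := hnl a h1
      refine ⟨((Pfun lam (w a) : ℕ), (Mfun lam (Pfun lam (w a)) : ℕ)), ?_, ?_⟩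
      · exact Icomp_mem lam (Pfun_not_rpos lam (w a))
      · rw [Mfun_Pfun_of_not_lpos lam hwa]
    · intro τ hτ τ' hτ' he
      obtain ⟨a, h1, h2, h3, rfl⟩ := hmemB τ hτ
      obtain ⟨a', h1', h2', h3', rfl⟩ := hmemB τ' hτ'
      have : a = a' := Fin.val_injective he
      rw [this]
    · intro τ hτ τ' hτ' he
      obtain ⟨a, h1, h2, h3, rfl⟩ := hmemB τ hτ
      obtain ⟨a', h1', h2', h3', rfl⟩ := hmemB τ' hτ'
      have : a = a' := w.injective (Fin.val_injective he)
      rw [this]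
    · intro τ hτ α hα he1 he2
      obtain ⟨a, h1, h2, h3, rfl⟩ := hmemB τ hτ
      obtain ⟨a', ha', he⟩ := Finset.mem_image.1 hα
      -- α = (a', Mfun a'), α.1 = a so a' = a, and w a < Mfun a
      have ha'1 : (a' : ℕ) = (a : ℕ) := by
        rw [← he] at he1
        exact he1
      have haa : a' = a := Fin.val_injective ha'1
      subst haa
      have hMa : (Mfun lam a' : ℕ) = α.2 := by rw [← he]
      -- goal: a' < w a'
      have hle := hge a' h1
      rcases lt_or_eq_of_le hle with h | h
      · exact h
      · exfalso
        have hwa' : w a' = a' := (Fin.val_injective h.symm)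
        have : a' ∉ lpos lam := by
          have := hnl a' h1
          rwa [hwa'] at this
        have hM : Mfun lam a' = a' := Mfun_of_not_lpos lam this
        rw [hM] at hMa
        rw [← hMa] at he2
        omega
  omega

end S11

namespace S11
open Finset NCP
variable {n : ℕ} (lam : NCP n)

/-- diagonal value of dd for any permutation in the class pattern -/
lemma dd_diag_of (u : Equiv.Perm (Fin n))
    (hlt : ∀ b ∈ rpos lam, (u b : ℕ) < (b : ℕ))
    (hge : ∀ a : Fin n, a ∉ rpos lam → (a:ℕ) ≤ (u a : ℕ))
    (hnl : ∀ a : Fin n, a ∉ rpos lam → u a ∉ lpos lam) (m : ℕ) :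
    dd u m m = (univ.filter (fun b : Fin n => b ∈ rpos lam ∧ (b:ℕ) < m)).card
      + (univ.filter (fun v : Fin n => v ∉ lpos lam ∧ (v:ℕ) < m)).card := by
  rw [dd_class_split lam u m m]
  congr 1
  · -- R part: the value condition is automatic
    apply Finset.card_bij (fun (b : Fin n) (_ : b ∈ _) => b)
    · intro b hb
      simp only [Finset.mem_filter, mem_univ, true_and] at hb ⊢
      exact ⟨hb.1, hb.2.1⟩
    · intro b _ b' _ he
      exact he
    · intro b hb
      simp only [Finset.mem_filter, mem_univ, true_and] at hb
      refine ⟨b, ?_, rfl⟩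
      simp only [Finset.mem_filter, mem_univ, true_and]
      have := hlt b hb.1
      exact ⟨hb.1, hb.2, by omega⟩
  · -- C part: bijection via u
    apply Finset.card_bij (fun (a : Fin n) (_ : a ∈ _) => u a)
    · intro a ha
      simp only [Finset.mem_filter, mem_univ, true_and] at ha ⊢
      exact ⟨hnl a ha.1, ha.2.2⟩
    · intro a _ a' _ he
      exact u.injective he
    · intro v hv
      simp only [Finset.mem_filter, mem_univ, true_and] at hv
      obtain ⟨a, ha, rfl⟩ := mins_to_maxs_surj lam u hnl
        (fun a a' _ _ he => u.injective he) v hv.1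
      refine ⟨a, ?_, rfl⟩
      simp only [Finset.mem_filter, mem_univ, true_and]
      have := hge a ha
      exact ⟨ha, by omega, hv.2⟩

/-- membership in the excedance class, pointwise characterization -/
lemma mem_Cset_iff (w : Equiv.Perm (Fin n)) :
    w ∈ Cset lam ↔
      ((∀ j : Fin n, (w j : ℕ) < (j : ℕ) ↔ j ∈ rpos lam) ∧
       (∀ j ∈ rpos lam, w j ∈ lpos lam) ∧
       (∀ j : Fin n, j ∉ rpos lam → w j ∉ lpos lam)) := by
  constructor
  · rintro ⟨hval, hpos⟩
    have hposmem : ∀ j : Fin n, j ≤ w j ↔ j ∉ rpos lam := by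
      intro j
      constructor
      · intro hle
        have : j ∈ ExcPos w := by
          rw [ExcPos]
          simp only [Finset.mem_filter, mem_univ, true_and]
          exact hle
        rw [hpos] at this
        exact (Finset.mem_sdiff.1 this).2
      · intro hnr
        have : j ∈ ExcPos w := by
          rw [hpos]
          exact Finset.mem_sdiff.2 ⟨mem_univ _, hnr⟩
        rw [ExcPos] at this
        simp only [Finset.mem_filter, mem_univ, true_and] at this
        exact this
    have hiff : ∀ j : Fin n, (w j : ℕ) < (j : ℕ) ↔ j ∈ rpos lam := by
      intro j
      rw [← not_iff_not, not_lt]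
      have : (j : ℕ) ≤ (w j : ℕ) ↔ j ≤ w j := Iff.rfl
      rw [this, hposmem]
    refine ⟨hiff, ?_, ?_⟩
    · intro j hj
      by_contra hnl
      have : w j ∈ ExcVal w := by
        rw [hval]
        exact Finset.mem_sdiff.2 ⟨mem_univ _, hnl⟩
      rw [ExcVal] at this
      obtain ⟨j', hj', he⟩ := Finset.mem_image.1 this
      have : j' = j := w.injective he
      subst this
      rw [ExcPos] at hj'
      simp only [Finset.mem_filter, mem_univ, true_and] at hj'
      have := (hposmem j').1 hj'
      exact this hj
    · intro j hnr
      have hjm : j ∈ ExcPos w := by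
        rw [hpos]
        exact Finset.mem_sdiff.2 ⟨mem_univ _, hnr⟩
      have : w j ∈ ExcVal w := by
        rw [ExcVal]
        exact Finset.mem_image_of_mem w hjm
      rw [hval] at this
      exact (Finset.mem_sdiff.1 this).2
  · rintro ⟨hiff, hc, hd⟩
    have hpos : ExcPos w = univ \ rpos lam := by
      rw [ExcPos]
      ext j
      simp only [Finset.mem_filter, mem_univ, true_and, Finset.mem_sdiff]
      constructor
      · intro hle hr
        have := (hiff j).2 hr
        have hle' : (j : ℕ) ≤ (w j : ℕ) := hle
        omega
      · intro hnr
        have h1 : ¬ ((w j : ℕ) < (j : ℕ)) := fun hlt => hnr ((hiff j).1 hlt)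
        have h2 : (j : ℕ) ≤ (w j : ℕ) := by omega
        exact h2
    refine ⟨?_, hpos⟩
    rw [ExcVal, hpos]
    ext v
    simp only [Finset.mem_sdiff, mem_univ, true_and]
    constructor
    · intro hv
      obtain ⟨j, hj, rfl⟩ := Finset.mem_image.1 hv
      rw [Finset.mem_sdiff] at hj
      exact hd j hj.2
    · intro hv
      refine Finset.mem_image.2 ⟨w⁻¹ v, ?_, by simp⟩
      rw [Finset.mem_sdiff]
      refine ⟨mem_univ _, fun hr => ?_⟩
      have := hc _ hr
      rw [show w (w⁻¹ v) = v from w.apply_symm_apply v] at this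
      exact hv this

section Main
variable {T Q : Equiv.Perm (Fin n)} (hT : IsT lam T) (hQ : IsQ lam Q)

include hT in
lemma K_upper (w : Equiv.Perm (Fin n))
    (hwL : ∀ j ∈ rpos lam, w j ∈ lpos lam)
    (hwnl : ∀ j : Fin n, j ∉ rpos lam → w j ∉ lpos lam) :
    ∀ m x, dd w m x ≤ dd T m x := by
  intro m x
  rw [dd_class_split lam w m x, dd_class_split lam T m x]
  have h1 := ORD (fun a => a ∈ rpos lam) (fun v => v ∈ lpos lam) T w
    (fun j => hT.1 j) (fun j j' hj hj' hlt => hT.2.1 j j' hj hj' hlt) hwL m x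
  have h2 := ORD (fun a => a ∉ rpos lam) (fun v => v ∉ lpos lam) T w
    (fun j => not_iff_not.2 (hT.1 j)) (fun j j' hj hj' hlt => hT.2.2 j j' hj hj' hlt)
    hwnl m x
  omega

include hQ in
lemma K_lower (w : Equiv.Perm (Fin n))
    (hwlt : ∀ b ∈ rpos lam, (w b : ℕ) < (b : ℕ))
    (hwge : ∀ a : Fin n, a ∉ rpos lam → (a:ℕ) ≤ (w a : ℕ))
    (hwL : ∀ j ∈ rpos lam, w j ∈ lpos lam)
    (hwnl : ∀ j : Fin n, j ∉ rpos lam → w j ∉ lpos lam) :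
    ∀ m x, dd Q m x ≤ dd w m x := by
  intro m x
  rw [dd_class_split lam Q m x, dd_class_split lam w m x]
  have hfR : univ.filter (fun a : Fin n => a ∈ rpos lam ∧ (a:ℕ) < m ∧ (Q a : ℕ) < x)
      = univ.filter (fun a : Fin n => a ∈ rpos lam ∧ (a:ℕ) < m ∧ (pfun lam a : ℕ) < x) := by
    apply Finset.filter_congr
    intro a _
    by_cases ha : a ∈ rpos lam
    · rw [Q_eq_pfun lam hQ a ha]
    · simp only [ha, false_and]
  have hfC : univ.filter (fun a : Fin n => a ∉ rpos lam ∧ (a:ℕ) < m ∧ (Q a : ℕ) < x)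
      = univ.filter (fun a : Fin n => a ∉ rpos lam ∧ (a:ℕ) < m ∧ (Mfun lam a : ℕ) < x) := by
    apply Finset.filter_congr
    intro a _
    by_cases ha : a ∉ rpos lam
    · rw [Q_eq_Mfun lam hQ a ha]
    · simp only [ha, false_and]
  rw [hfR, hfC]
  have h1 := K_lower_R lam w hwlt hwL m x
  have h2 := K_lower_C lam w hwge hwnl m x
  omega

include hT hQ in
lemma diag_eq (w : Equiv.Perm (Fin n))
    (hdT : ∀ m x, dd w m x ≤ dd T m x) (hdQ : ∀ m x, dd Q m x ≤ dd w m x) (m : ℕ) :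
    dd w m m = dd T m m ∧ dd w m m = dd Q m m := by
  have hTd := dd_diag_of lam T (T_lt lam hT) (T_ge lam hT) (T_not_lpos lam hT) m
  have hQd := dd_diag_of lam Q (Q_lt lam hQ) (Q_ge lam hQ)
    (fun a ha => by
      rw [Q_eq_Mfun lam hQ a ha]
      exact Mfun_not_lpos lam a) m
  have h1 := hdT m m
  have h2 := hdQ m m
  omega

end Main
end S11


/-- the excedance class `C_λ` is the Bruhat interval `[T_λ, Q_λ]`,
with Bruhat-minimum the `321`-avoiding permutation `T_λ` and Bruhat-maximum `Q_λ`. -/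
theorem stmt11 (n : ℕ) (lam : NCP n) (T Q : Equiv.Perm (Fin n))
    (hT : NCP.IsT lam T) (hQ : NCP.IsQ lam Q) :
    NCP.Cset lam = {w | BruhatLE T w ∧ BruhatLE w Q} ∧
    (∀ i j k : Fin n, i < j → j < k → ¬(T k < T j ∧ T j < T i)) := by
  open S11 NCP Finset in
  constructor
  · ext w
    simp only [Set.mem_setOf_eq]
    constructor
    · intro hw
      obtain ⟨hiff, hc, hd⟩ := (mem_Cset_iff lam w).1 hw
      have hwlt : ∀ b ∈ rpos lam, (w b : ℕ) < (b : ℕ) := fun b hb => (hiff b).2 hb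
      have hwge : ∀ a : Fin n, a ∉ rpos lam → (a:ℕ) ≤ (w a : ℕ) := by
        intro a ha
        have : ¬ ((w a : ℕ) < (a : ℕ)) := fun hlt => ha ((hiff a).1 hlt)
        omega
      have hupper := K_upper lam hT w hc hd
      have hlower := K_lower lam hQ w hwlt hwge hc hd
      exact ⟨bruhatLE_of_dd _ T w rfl hupper, bruhatLE_of_dd _ w Q rfl hlower⟩
    · rintro ⟨hTw, hwQ⟩
      have hdT := dd_anti hTw
      have hdQ := dd_anti hwQ
      have hdiag := fun m => diag_eq lam hT hQ w hdT hdQ m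
      have hi : ∀ j : Fin n, j ∈ rpos lam → (w j : ℕ) < (j : ℕ) := by
        intro j hj
        have r1 := dd_succ_row w j ((j:ℕ))
        have r2 := dd_succ_row Q j ((j:ℕ))
        have hQlt := Q_lt lam hQ j hj
        have h3 := hdQ ((j:ℕ)+1) ((j:ℕ))
        have d1 := (hdiag ((j:ℕ))).1
        have d2 := (hdiag ((j:ℕ))).2
        rw [if_pos hQlt] at r2
        by_contra hge
        push_neg at hge
        rw [if_neg (by omega)] at r1
        omega
      have hii : ∀ j : Fin n, j ∉ rpos lam → ¬ ((w j : ℕ) < (j : ℕ)) := by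
        intro j hj hlt
        have r1 := dd_succ_row w j ((j:ℕ))
        have r2 := dd_succ_row T j ((j:ℕ))
        have hTge := T_ge lam hT j hj
        have h3 := hdT ((j:ℕ)+1) ((j:ℕ))
        have d1 := (hdiag ((j:ℕ))).1
        rw [if_neg (by omega)] at r2
        rw [if_pos hlt] at r1
        omega
      have hiii : ∀ v : Fin n, v ∈ lpos lam → (v : ℕ) < ((w⁻¹ v : Fin n) : ℕ) := by
        intro v hv
        have c1 := dd_succ_col w ((v:ℕ)+1) v
        have c2 := dd_succ_col Q ((v:ℕ)+1) v
        have hQgt := Qinv_gt lam hQ hv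
        have h3 := hdQ ((v:ℕ)+1) ((v:ℕ))
        have d1 := (hdiag ((v:ℕ)+1)).2
        rw [if_neg (by omega)] at c2
        by_contra hge
        push_neg at hge
        rw [if_pos (by omega)] at c1
        omega
      have hiv : ∀ v : Fin n, v ∉ lpos lam → ((w⁻¹ v : Fin n) : ℕ) ≤ (v : ℕ) := by
        intro v hv
        have c1 := dd_succ_col w ((v:ℕ)+1) v
        have c2 := dd_succ_col T ((v:ℕ)+1) v
        have hTle := Tinv_le lam hT hv
        have h3 := hdT ((v:ℕ)+1) ((v:ℕ))
        have d1 := (hdiag ((v:ℕ)+1)).1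
        rw [if_pos (by omega)] at c2
        by_contra hgt
        push_neg at hgt
        rw [if_neg (by omega)] at c1
        omega
      refine (mem_Cset_iff lam w).2 ⟨?_, ?_, ?_⟩
      · intro j
        constructor
        · intro hlt
          by_contra hnr
          exact hii j hnr hlt
        · exact hi j
      · intro j hj
        by_contra hnl
        have h1 := hiv (w j) hnl
        rw [show w⁻¹ (w j) = j from w.symm_apply_apply j] at h1
        have h2 := hi j hj
        omega
      · intro j hnr hl
        have h1 := hiii (w j) hl
        rw [show w⁻¹ (w j) = j from w.symm_apply_apply j] at h1
        exact hii j hnr (by omega)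
  · intro i j k hij hjk hcon
    obtain ⟨h1, h2⟩ := hcon
    have v1 : (T k : ℕ) < (T j : ℕ) := h1
    have v2 : (T j : ℕ) < (T i : ℕ) := h2
    by_cases hi : i ∈ rpos lam <;> by_cases hj : j ∈ rpos lam <;> by_cases hk : k ∈ rpos lam
    · have h := hT.2.1 i j hi hj hij
      have : (T i : ℕ) < (T j : ℕ) := h
      omega
    · have h := hT.2.1 i j hi hj hij
      have : (T i : ℕ) < (T j : ℕ) := h
      omega
    · have h := hT.2.1 i k hi hk (lt_trans hij hjk)
      have : (T i : ℕ) < (T k : ℕ) := h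
      omega
    · have h := hT.2.2 j k hj hk hjk
      have : (T j : ℕ) < (T k : ℕ) := h
      omega
    · have h := hT.2.1 j k hj hk hjk
      have : (T j : ℕ) < (T k : ℕ) := h
      omega
    · have h := hT.2.2 i k hi hk (lt_trans hij hjk)
      have : (T i : ℕ) < (T k : ℕ) := h
      omega
    · have h := hT.2.2 i j hi hj hij
      have : (T i : ℕ) < (T j : ℕ) := h
      omega
    · have h := hT.2.2 i j hi hj hij
      have : (T i : ℕ) < (T j : ℕ) := h
      omega
end
end

section
/- Suppose w ∈ S_n has a 321-pattern (indices i₀ < j₀ < k₀ with w(i₀) > w(j₀) > w(k₀)). Then w has a 321-pattern i < j < k with i ∈ E_pos(w) and k ∉ E_pos(w); moreover, for such a pattern, exactly one of the five permutations obtained from w by nontrivially rearranging the values w(i), w(j), w(k) among the positions i, j, k (agreeing with w elsewhere) belongs to the same excedance class as w. -/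
open scoped Classical

noncomputable section

open MvPolynomial

section Stmt15Aux

variable {n : ℕ}

private lemma mem_excPos {w : Equiv.Perm (Fin n)} {x : Fin n} :
    x ∈ ExcPos w ↔ x ≤ w x := by simp [ExcPos]

private lemma mem_excVal {w : Equiv.Perm (Fin n)} {y : Fin n} :
    y ∈ ExcVal w ↔ w⁻¹ y ≤ y := by
  simp only [ExcVal, Finset.mem_image]
  constructor
  · rintro ⟨x, hx, rfl⟩
    simpa using mem_excPos.mp hx
  · intro h
    exact ⟨w⁻¹ y, mem_excPos.mpr (by simpa using h), by simp⟩

private lemma exists_lower (w : Equiv.Perm (Fin n)) (x : Fin n) (hx : w x < x) :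
    ∃ p, p < x ∧ w x ≤ w p := by
  by_contra hc
  push_neg at hc
  have hmap : ∀ p ∈ Finset.Iic x, w p ∈ Finset.Iic (w x) := by
    intro p hp
    rcases eq_or_lt_of_le (Finset.mem_Iic.mp hp) with h | h
    · simp [h]
    · exact Finset.mem_Iic.mpr (le_of_lt (hc p h))
  have hcard := Finset.card_le_card_of_injOn w hmap w.injective.injOn
  rw [Fin.card_Iic, Fin.card_Iic] at hcard
  omega

private lemma exists_higher (w : Equiv.Perm (Fin n)) (x y : Fin n) (hx : x ≤ w x)
    (hy : y < x) (hwy : w x < w y) : ∃ q, x < q ∧ w q ≤ w x := by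
  by_contra hc
  push_neg at hc
  have hmap : ∀ p ∈ insert y (Finset.Ici x), w p ∈ Finset.Ici (w x) := by
    intro p hp
    rcases Finset.mem_insert.mp hp with h | h
    · exact Finset.mem_Ici.mpr (le_of_lt (h ▸ hwy))
    · rcases eq_or_lt_of_le (Finset.mem_Ici.mp h) with h' | h'
      · simp [← h']
      · exact Finset.mem_Ici.mpr (le_of_lt (hc p h'))
  have hcard := Finset.card_le_card_of_injOn w hmap w.injective.injOn
  rw [Finset.card_insert_of_notMem (by simp [hy, not_le]), Fin.card_Ici, Fin.card_Ici] at hcard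
  have h1 : (x : ℕ) ≤ (w x : ℕ) := hx
  have h2 : (x : ℕ) < n := x.isLt
  have h3 : ((w x : Fin n) : ℕ) < n := (w x).isLt
  omega

private lemma case1_contra {w σ : Equiv.Perm (Fin n)} {p k : Fin n} (hp : p ≤ w p)
    (hval : (w * σ) p = w k) (hinv : (w * σ)⁻¹ (w k) = p) (hk : w k < k)
    (hEq : ExcEq (w * σ) w) : False := by
  have h1 : p ∈ ExcPos (w * σ) := hEq.2 ▸ mem_excPos.mpr hp
  have h2 : p ≤ w k := hval ▸ mem_excPos.mp h1
  have h3 : w k ∈ ExcVal (w * σ) := mem_excVal.mpr (by rw [hinv]; exact h2)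
  have h4 : k ≤ w k := by
    have := mem_excVal.mp (hEq.1 ▸ h3); simpa using this
  exact absurd h4 (not_le.mpr hk)

private lemma case2_contra {w σ : Equiv.Perm (Fin n)} {p i : Fin n} (hi : i ≤ w i)
    (hinv : (w * σ)⁻¹ (w i) = p) (hval : (w * σ) p = w i) (hwp : w p < p)
    (hEq : ExcEq (w * σ) w) : False := by
  have h1 : w i ∈ ExcVal w := mem_excVal.mpr (by simpa using hi)
  have h2 : (w * σ)⁻¹ (w i) ≤ w i := mem_excVal.mp (hEq.1.symm ▸ h1)
  rw [hinv] at h2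
  have h3 : p ∈ ExcPos (w * σ) := mem_excPos.mpr (by rw [hval]; exact h2)
  have h4 : p ≤ w p := mem_excPos.mp (hEq.2 ▸ h3)
  exact absurd h4 (not_le.mpr hwp)

private lemma perm_inv_apply_self (f : Equiv.Perm (Fin n)) (x : Fin n) : f⁻¹ (f x) = x :=
  Equiv.Perm.inv_eq_iff_eq.mpr rfl

private lemma perm_apply_inv_self (f : Equiv.Perm (Fin n)) (x : Fin n) : f (f⁻¹ x) = x :=
  (Equiv.eq_symm_apply f).mp rfl

end Stmt15Aux

/-- if `w` has a `321`-pattern then it has one `i < j < k` with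
`i ∈ E_pos(w)` and `k ∉ E_pos(w)`; moreover for any such pattern, exactly one of the
five nontrivial rearrangements of the values `w(i), w(j), w(k)` among the positions
`i, j, k` lies in the same excedance class as `w`. -/
theorem stmt15 (n : ℕ) (w : Equiv.Perm (Fin n))
    (h : ∃ i0 j0 k0 : Fin n, i0 < j0 ∧ j0 < k0 ∧ w j0 < w i0 ∧ w k0 < w j0) :
    (∃ i j k : Fin n, i < j ∧ j < k ∧ w j < w i ∧ w k < w j ∧
      i ∈ ExcPos w ∧ k ∉ ExcPos w) ∧
    (∀ i j k : Fin n, i < j → j < k → w j < w i → w k < w j →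
      i ∈ ExcPos w → k ∉ ExcPos w →
      ∃! σ : Equiv.Perm (Fin n),
        σ ∈ ({Equiv.swap i j, Equiv.swap j k, Equiv.swap i j * Equiv.swap j k,
            Equiv.swap j k * Equiv.swap i j, Equiv.swap i k} :
          Set (Equiv.Perm (Fin n))) ∧ ExcEq (w * σ) w) := by
  constructor
  · -- existence
    obtain ⟨i0, j0, k0, h1, h2, h3, h4⟩ := h
    set S1 : Finset (Fin n) :=
      Finset.univ.filter (fun i => ∃ j k, i < j ∧ j < k ∧ w j < w i ∧ w k < w j) with hS1
    have hS1ne : S1.Nonempty := ⟨i0, by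
      simp only [hS1, Finset.mem_filter, Finset.mem_univ, true_and]
      exact ⟨j0, k0, h1, h2, h3, h4⟩⟩
    set i := S1.min' hS1ne with hidef
    obtain ⟨-, j1, k1, hij1, hjk1, hwj1, hwk1⟩ :=
      Finset.mem_filter.mp (S1.min'_mem hS1ne)
    have hi : i ≤ w i := by
      by_contra hcon
      push_neg at hcon
      obtain ⟨p, hp, hwp⟩ := exists_lower w i hcon
      have hpS : p ∈ S1 := by
        simp only [hS1, Finset.mem_filter, Finset.mem_univ, true_and]
        exact ⟨j1, k1, lt_trans hp hij1, hjk1, lt_of_lt_of_le hwj1 hwp, hwk1⟩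
      exact absurd (S1.min'_le p hpS) (not_le.mpr hp)
    set S2 : Finset (Fin n) :=
      Finset.univ.filter (fun k => ∃ j, i < j ∧ j < k ∧ w j < w i ∧ w k < w j) with hS2
    have hS2ne : S2.Nonempty := ⟨k1, by
      simp only [hS2, Finset.mem_filter, Finset.mem_univ, true_and]
      exact ⟨j1, hij1, hjk1, hwj1, hwk1⟩⟩
    set k := S2.max' hS2ne with hkdef
    obtain ⟨-, j2, hij2, hjk2, hwj2, hwk2⟩ :=
      Finset.mem_filter.mp (S2.max'_mem hS2ne)
    have hk : ¬ k ≤ w k := by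
      intro hle
      obtain ⟨q, hq, hwq⟩ := exists_higher w k j2 hle hjk2 hwk2
      have hqS : q ∈ S2 := by
        simp only [hS2, Finset.mem_filter, Finset.mem_univ, true_and]
        exact ⟨j2, hij2, lt_trans hjk2 hq, hwj2, lt_of_le_of_lt hwq hwk2⟩
      exact absurd (S2.le_max' q hqS) (not_le.mpr hq)
    exact ⟨i, j2, k, hij2, hjk2, hwj2, hwk2, mem_excPos.mpr hi,
      fun hm => hk (mem_excPos.mp hm)⟩
  · -- uniqueness part
    intro i j k hij hjk hji hkj hiE hkE
    have hia : i ≤ w i := mem_excPos.mp hiE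
    have hkc : w k < k := not_le.mp (fun hle => hkE (mem_excPos.mpr hle))
    have hij' : i ≠ j := ne_of_lt hij
    have hjk' : j ≠ k := ne_of_lt hjk
    have hik' : i ≠ k := ne_of_lt (lt_trans hij hjk)
    by_cases hjb : j ≤ w j
    · -- case 1 : witness swap i j
      refine ⟨Equiv.swap i j, ⟨by left; rfl, ?_, ?_⟩, ?_⟩
      · -- ExcVal equality
        ext y
        rw [mem_excVal, mem_excVal]
        have hinv : (w * Equiv.swap i j)⁻¹ y = Equiv.swap i j (w⁻¹ y) := by
          rw [mul_inv_rev, Equiv.Perm.mul_apply, Equiv.swap_inv]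
        rw [hinv]
        by_cases h1 : w⁻¹ y = i
        · have hy : y = w i := by rw [← h1, perm_apply_inv_self]
          rw [h1, Equiv.swap_apply_left, hy]
          exact iff_of_true (le_of_lt (lt_of_le_of_lt hjb hji)) hia
        · by_cases h2 : w⁻¹ y = j
          · have hy : y = w j := by rw [← h2, perm_apply_inv_self]
            rw [h2, Equiv.swap_apply_right, hy]
            exact iff_of_true (le_trans (le_of_lt hij) hjb) hjb
          · rw [Equiv.swap_apply_of_ne_of_ne h1 h2]
      · -- ExcPos equality
        ext x
        rw [mem_excPos, mem_excPos, Equiv.Perm.mul_apply]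
        by_cases h1 : x = i
        · subst h1
          rw [Equiv.swap_apply_left]
          exact iff_of_true (le_trans (le_of_lt hij) hjb) hia
        · by_cases h2 : x = j
          · subst h2
            rw [Equiv.swap_apply_right]
            exact iff_of_true (le_of_lt (lt_of_le_of_lt hjb hji)) hjb
          · rw [Equiv.swap_apply_of_ne_of_ne h1 h2]
      · -- uniqueness
        rintro σ ⟨hmem, hEq⟩
        simp only [Set.mem_insert_iff, Set.mem_singleton_iff] at hmem
        rcases hmem with rfl | rfl | rfl | rfl | rfl
        · rfl
        · exact absurd hEq (fun hEq => case1_contra hjb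
            (by rw [Equiv.Perm.mul_apply, Equiv.swap_apply_left])
            (by rw [mul_inv_rev, Equiv.Perm.mul_apply, perm_inv_apply_self,
                Equiv.swap_inv, Equiv.swap_apply_right]) hkc hEq)
        · exact absurd hEq (fun hEq => case1_contra hjb
            (by rw [Equiv.Perm.mul_apply, Equiv.Perm.mul_apply, Equiv.swap_apply_left,
                Equiv.swap_apply_of_ne_of_ne (Ne.symm hik') (Ne.symm hjk')])
            (by rw [mul_inv_rev, Equiv.Perm.mul_apply, perm_inv_apply_self,
                mul_inv_rev, Equiv.Perm.mul_apply, Equiv.swap_inv, Equiv.swap_inv,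
                Equiv.swap_apply_of_ne_of_ne (Ne.symm hik') (Ne.symm hjk'),
                Equiv.swap_apply_right]) hkc hEq)
        · exact absurd hEq (fun hEq => case1_contra hia
            (by rw [Equiv.Perm.mul_apply, Equiv.Perm.mul_apply, Equiv.swap_apply_left,
                Equiv.swap_apply_left])
            (by rw [mul_inv_rev, Equiv.Perm.mul_apply, perm_inv_apply_self,
                mul_inv_rev, Equiv.Perm.mul_apply, Equiv.swap_inv, Equiv.swap_inv,
                Equiv.swap_apply_right, Equiv.swap_apply_right]) hkc hEq)
        · exact absurd hEq (fun hEq => case1_contra hia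
            (by rw [Equiv.Perm.mul_apply, Equiv.swap_apply_left])
            (by rw [mul_inv_rev, Equiv.Perm.mul_apply, perm_inv_apply_self,
                Equiv.swap_inv, Equiv.swap_apply_right]) hkc hEq)
    · -- case 2 : witness swap j k
      have hjb' : w j < j := not_le.mp hjb
      refine ⟨Equiv.swap j k, ⟨by right; left; rfl, ?_, ?_⟩, ?_⟩
      · -- ExcVal equality
        ext y
        rw [mem_excVal, mem_excVal]
        have hinv : (w * Equiv.swap j k)⁻¹ y = Equiv.swap j k (w⁻¹ y) := by
          rw [mul_inv_rev, Equiv.Perm.mul_apply, Equiv.swap_inv]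
        rw [hinv]
        by_cases h1 : w⁻¹ y = j
        · have hy : y = w j := by rw [← h1, perm_apply_inv_self]
          rw [h1, Equiv.swap_apply_left, hy]
          exact iff_of_false (not_le.mpr (lt_trans hjb' hjk)) hjb
        · by_cases h2 : w⁻¹ y = k
          · have hy : y = w k := by rw [← h2, perm_apply_inv_self]
            rw [h2, Equiv.swap_apply_right, hy]
            exact iff_of_false (not_le.mpr (lt_trans hkj hjb')) (not_le.mpr hkc)
          · rw [Equiv.swap_apply_of_ne_of_ne h1 h2]
      · -- ExcPos equality
        ext x
        rw [mem_excPos, mem_excPos, Equiv.Perm.mul_apply]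
        by_cases h1 : x = j
        · subst h1
          rw [Equiv.swap_apply_left]
          exact iff_of_false (not_le.mpr (lt_trans hkj hjb')) hjb
        · by_cases h2 : x = k
          · subst h2
            rw [Equiv.swap_apply_right]
            exact iff_of_false (not_le.mpr (lt_trans hjb' hjk)) (not_le.mpr hkc)
          · rw [Equiv.swap_apply_of_ne_of_ne h1 h2]
      · -- uniqueness
        rintro σ ⟨hmem, hEq⟩
        simp only [Set.mem_insert_iff, Set.mem_singleton_iff] at hmem
        rcases hmem with rfl | rfl | rfl | rfl | rfl
        · exact absurd hEq (fun hEq => case2_contra hia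
            (by rw [mul_inv_rev, Equiv.Perm.mul_apply, perm_inv_apply_self,
                Equiv.swap_inv, Equiv.swap_apply_left])
            (by rw [Equiv.Perm.mul_apply, Equiv.swap_apply_right]) hjb' hEq)
        · rfl
        · exact absurd hEq (fun hEq => case2_contra hia
            (by rw [mul_inv_rev, Equiv.Perm.mul_apply, perm_inv_apply_self,
                mul_inv_rev, Equiv.Perm.mul_apply, Equiv.swap_inv, Equiv.swap_inv,
                Equiv.swap_apply_left, Equiv.swap_apply_left])
            (by rw [Equiv.Perm.mul_apply, Equiv.Perm.mul_apply, Equiv.swap_apply_right,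
                Equiv.swap_apply_right]) hkc hEq)
        · exact absurd hEq (fun hEq => case2_contra hia
            (by rw [mul_inv_rev, Equiv.Perm.mul_apply, perm_inv_apply_self,
                mul_inv_rev, Equiv.Perm.mul_apply, Equiv.swap_inv, Equiv.swap_inv,
                Equiv.swap_apply_of_ne_of_ne hij' hik', Equiv.swap_apply_left])
            (by rw [Equiv.Perm.mul_apply, Equiv.Perm.mul_apply, Equiv.swap_apply_right,
                Equiv.swap_apply_of_ne_of_ne hij' hik']) hjb' hEq)
        · exact absurd hEq (fun hEq => case2_contra hia
            (by rw [mul_inv_rev, Equiv.Perm.mul_apply, perm_inv_apply_self,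
                Equiv.swap_inv, Equiv.swap_apply_left])
            (by rw [Equiv.Perm.mul_apply, Equiv.swap_apply_right]) hkc hEq)
end
end
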